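/- arXiv:1606.02097 — 6 statements merged into one kernel-verified Lean document; each statement's English description precedes it below -/
import Mathlib

section
/- Let G be a group acting faithfully, transitively and primitively on a finite set Ω, and suppose that for some ω ∈ Ω the point stabilizer G_ω has an orbit of length 2. Then |Ω| is an odd prime and G is isomorphic to the dihedral group of order 2|Ω|. -/
/-- A primitive permutation group: transitive and every point stabilizer is a
maximal subgroup (a coatom in the subgroup lattice). -/
def IsPrimitiveAction (G : Type*) (Ω : Type*) [Group G] [MulAction G Ω] : Prop :=
  MulAction.IsPretransitive G Ω ∧ ∀ ω : Ω, IsCoatom (MulAction.stabilizer G ω)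

private lemma aux_normal_of_index_two {G : Type*} [Group G] {S : Subgroup G}
    (h : S.index = 2) : S.Normal := by
  constructor
  intro k hk x
  rw [Subgroup.mul_mem_iff_of_index_two h, Subgroup.mul_mem_iff_of_index_two h,
    Subgroup.inv_mem_iff]
  tauto

private lemma aux_le_normalizer_of_relindex_two {G : Type*} [Group G] {K A : Subgroup G}
    (hKA : K ≤ A) (h : K.relIndex A = 2) : A ≤ Subgroup.normalizer (K : Set G) := by
  have hnorm : (K.subgroupOf A).Normal := aux_normal_of_index_two h
  have key : ∀ x ∈ A, ∀ k ∈ K, x * k * x⁻¹ ∈ K := by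
    intro x hx k hk
    have h2 := hnorm.conj_mem ⟨k, hKA hk⟩
      (by simpa [Subgroup.mem_subgroupOf] using hk) ⟨x, hx⟩
    simpa [Subgroup.mem_subgroupOf] using h2
  intro x hx
  rw [Subgroup.mem_normalizer_iff]
  intro k
  constructor
  · intro hk; exact key x hx k hk
  · intro hk
    have h3 := key x⁻¹ (A.inv_mem hx) _ hk
    simpa [mul_assoc] using h3

theorem stmt_1 (G : Type*) (Ω : Type*) [Group G] [MulAction G Ω] [Finite Ω]
    [FaithfulSMul G Ω]
    (hprim : IsPrimitiveAction G Ω)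
    (ω : Ω) (α : Ω)
    (horb : (MulAction.orbit (MulAction.stabilizer G ω) α).ncard = 2) :
    Odd (Nat.card Ω) ∧ (Nat.card Ω).Prime ∧
      Nonempty (G ≃* DihedralGroup (Nat.card Ω)) := by
  obtain ⟨htrans, hmax⟩ := hprim
  have hGfin : Finite G := Finite.of_injective _ (MulAction.toPerm_injective (α := G) (β := Ω))
  set n := Nat.card Ω with hn
  set H := MulAction.stabilizer G ω with hH
  set A := MulAction.stabilizer G α with hA
  -- the subgroup N of G, normal, contained in a stabilizer, is trivial
  have key_normal : ∀ N : Subgroup G, N.Normal → N ≤ H → N = ⊥ := by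
    intro N hNn hNH
    rw [eq_bot_iff]
    intro x hx
    have : ∀ y : Ω, x • y = y := by
      intro y
      obtain ⟨g', hg'⟩ := htrans.exists_smul_eq ω y
      have hmem : g'⁻¹ * x * g' ∈ N := by
        simpa using hNn.conj_mem x hx g'⁻¹
      have hfix : (g'⁻¹ * x * g') • ω = ω := hNH hmem
      calc x • y = x • g' • ω := by rw [hg']
        _ = g' • (g'⁻¹ * x * g') • ω := by
            rw [smul_smul, smul_smul]
            congr 1
            group
        _ = y := by rw [hfix, hg']
    have : x = 1 := eq_of_smul_eq_smul (M := G) (α := Ω) (by simpa using this)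
    simp [this]
  -- α ≠ ω
  have hαω : α ≠ ω := by
    intro hcon
    subst hcon
    have : MulAction.orbit H α = {α} := by
      ext y
      simp only [MulAction.mem_orbit_iff, Set.mem_singleton_iff]
      constructor
      · rintro ⟨⟨u, hu⟩, rfl⟩
        simpa [Subgroup.smul_def, hH] using hu
      · rintro rfl; exact ⟨1, one_smul _ _⟩
    rw [this] at horb
    simp at horb
  -- relindex of A in H is 2
  have hrel : A.relIndex H = 2 := by
    have h1 : (MulAction.stabilizer H α).index = 2 := by
      rw [MulAction.index_stabilizer, horb]
    have h2 : MulAction.stabilizer H α = A.subgroupOf H := by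
      ext ⟨x, hx⟩
      simp [MulAction.mem_stabilizer_iff, Subgroup.mem_subgroupOf, Subgroup.smul_def, hA]
    rwa [h2] at h1
  obtain ⟨g, hg⟩ := htrans.exists_smul_eq ω α
  set K := A ⊓ H with hK
  have hKH : K ≤ H := inf_le_right
  have hKA : K ≤ A := inf_le_left
  have hrelK : K.relIndex H = 2 := by
    rw [hK, Subgroup.inf_relIndex_right]; exact hrel
  -- A is the conjugate of H by g, hence same cardinality
  have hAconj : A = H.map (MulAut.conj g).toMonoidHom := by
    rw [hA, hH, ← hg, MulAction.stabilizer_smul_eq_stabilizer_map_conj]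
  have hcardAH : Nat.card A = Nat.card H := by
    rw [hAconj]
    exact Nat.card_congr (Subgroup.equivMapOfInjective H _ (MulAut.conj g).injective).toEquiv.symm
  -- relindex of K in A is also 2
  have hKcard : Nat.card K ≠ 0 := Nat.card_pos.ne'
  have hrelKA : K.relIndex A = 2 := by
    have e1 : Nat.card (K.subgroupOf A) = Nat.card K :=
      Nat.card_congr (Subgroup.subgroupOfEquivOfLe hKA).toEquiv
    have e2 : Nat.card (K.subgroupOf H) = Nat.card K :=
      Nat.card_congr (Subgroup.subgroupOfEquivOfLe hKH).toEquiv
    have i1 : (K.subgroupOf A).index * Nat.card K = Nat.card A := by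
      rw [← e1]; exact Subgroup.index_mul_card _
    have i2 : (K.subgroupOf H).index * Nat.card K = Nat.card H := by
      rw [← e2]; exact Subgroup.index_mul_card _
    have : (K.subgroupOf A).index * Nat.card K = 2 * Nat.card K := by
      rw [i1, hcardAH, ← i2,
        show (K.subgroupOf H).index = K.relIndex H from rfl, hrelK]
    have := Nat.eq_of_mul_eq_mul_right (Nat.pos_of_ne_zero hKcard) this
    exact this
  -- both H and A normalize K
  have hHnormK : H ≤ Subgroup.normalizer (K : Set G) := aux_le_normalizer_of_relindex_two hKH hrelK
  have hAnormK : A ≤ Subgroup.normalizer (K : Set G) := aux_le_normalizer_of_relindex_two hKA hrelKA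
  -- case analysis on the normalizer of K, using maximality of H
  have hcardH : Nat.card H = 2 := by
    rcases hHnormK.lt_or_eq with hlt | heq
    · -- normalizer is all of G, so K is normal, hence trivial
      have : Subgroup.normalizer (K : Set G) = ⊤ := (hmax ω).2 _ hlt
      have hKnorm : K.Normal := Subgroup.normalizer_eq_top_iff.mp this
      have hKbot : K = ⊥ := key_normal K hKnorm hKH
      rw [hKbot] at hrelK
      rwa [Subgroup.relIndex_bot_left] at hrelK
    · -- normalizer is H itself; derive a contradiction
      exfalso
      have hAH : A = H := by
        have hle : A ≤ H := heq ▸ hAnormK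
        have : A.subgroupOf H = ⊤ := by
          apply Subgroup.eq_top_of_card_eq
          rw [Nat.card_congr (Subgroup.subgroupOfEquivOfLe hle).toEquiv, hcardAH]
        have := Subgroup.subgroupOf_eq_top.mp this
        exact le_antisymm hle this
      -- then g normalizes H
      have hgnorm : g ∈ Subgroup.normalizer (H : Set G) := by
        rw [Subgroup.mem_normalizer_iff]
        intro x
        constructor
        · intro hx
          have : g * x * g⁻¹ ∈ H.map (MulAut.conj g).toMonoidHom :=
            ⟨x, hx, rfl⟩
          rwa [← hAconj, hAH] at this
        · intro hx
          rw [← hAH, hAconj] at hx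
          obtain ⟨y, hy, hyx⟩ := hx
          have : y = x := by
            simp only [MulEquiv.coe_toMonoidHom, MulAut.conj_apply] at hyx
            exact mul_left_cancel (mul_right_cancel hyx)
          rwa [← this]
      rcases (Subgroup.le_normalizer (H := H)).lt_or_eq with hlt2 | heq2
      · -- H normal in G, so trivial; contradiction with relindex 2
        have : Subgroup.normalizer (H : Set G) = ⊤ := (hmax ω).2 _ hlt2
        have hHbot : H = ⊥ := key_normal H (Subgroup.normalizer_eq_top_iff.mp this) le_rfl
        have hKbot : K = ⊥ := le_bot_iff.mp (hHbot ▸ hKH)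
        rw [hKbot, hHbot, Subgroup.relIndex_bot_left, Subgroup.card_bot] at hrelK
        norm_num at hrelK
      · -- normalizer H = H, so g ∈ H, so α = ω, contradiction
        have hgH : g ∈ H := heq2 ▸ hgnorm
        have : g • ω = ω := hgH
        rw [hg] at this
        exact hαω this
  -- extract the involution σ generating H
  obtain ⟨y, hy1, hy2⟩ := (Nat.card_eq_two_iff' (1 : H)).mp hcardH
  set σ : G := (y : G) with hσ
  have hσH : σ ∈ H := y.2
  have hσ1 : σ ≠ 1 := by
    intro hcon
    apply hy1
    exact Subtype.ext (by simpa [hσ] using hcon)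
  have hHmem : ∀ x ∈ H, x = 1 ∨ x = σ := by
    intro x hx
    by_cases h1 : (⟨x, hx⟩ : H) = 1
    · left; simpa using congrArg Subtype.val h1
    · right
      have := hy2 ⟨x, hx⟩ h1
      simpa [hσ] using congrArg Subtype.val this
  have hσsq : σ * σ = 1 := by
    rcases hHmem (σ * σ) (H.mul_mem hσH hσH) with h | h
    · exact h
    · exfalso
      have : σ = 1 := mul_right_cancel (a := σ) (by rw [h, one_mul])
      exact hσ1 this
  have hσinv : σ⁻¹ = σ := by
    rw [inv_eq_iff_mul_eq_one, hσsq]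
  -- H = {1, σ} is not central/normal: there is t with t σ t⁻¹ ≠ σ
  have hnotcentral : ¬ ∀ t : G, t * σ = σ * t := by
    intro hcomm
    have hHnorm : H.Normal := by
      constructor
      intro x hx t
      rcases hHmem x hx with rfl | rfl
      · simpa using H.one_mem
      · have : t * σ * t⁻¹ = σ := by
          rw [hcomm t, mul_assoc, mul_inv_cancel, mul_one]
        rw [this]; exact hσH
    have := key_normal H hHnorm le_rfl
    rw [this, Subgroup.card_bot] at hcardH
    norm_num at hcardH
  obtain ⟨t, ht⟩ := not_forall.mp hnotcentral
  set τ : G := t * σ * t⁻¹ with hτ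
  have hτσ : τ ≠ σ := by
    intro hcon
    apply ht
    have : t * σ = σ * t := by
      calc t * σ = (t * σ * t⁻¹) * t := by group
        _ = σ * t := by rw [← hτ, hcon]
    exact this
  have hτ1 : τ ≠ 1 := by
    intro hcon
    apply hσ1
    have : σ = t⁻¹ * 1 * t := by rw [← hcon, hτ]; group
    simpa using this
  have hτsq : τ * τ = 1 := by
    rw [hτ]
    calc t * σ * t⁻¹ * (t * σ * t⁻¹) = t * (σ * σ) * t⁻¹ := by group
      _ = 1 := by rw [hσsq]; group
  have hτinv : τ⁻¹ = τ := by rw [inv_eq_iff_mul_eq_one, hτsq]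
  -- the closure of {σ, τ} is all of G
  have hclosure : Subgroup.closure {σ, τ} = ⊤ := by
    apply (hmax ω).2
    constructor
    · intro x hx
      rcases hHmem x hx with rfl | rfl
      · exact Subgroup.one_mem _
      · exact Subgroup.subset_closure (by simp)
    · intro hle
      have : τ ∈ H := hle (Subgroup.subset_closure (by simp))
      rcases hHmem τ this with h | h
      · exact hτ1 h
      · exact hτσ h
  set ρ : G := σ * τ with hρ
  have hτρ : τ = σ * ρ := by rw [hρ, ← mul_assoc, hσsq, one_mul]
  have hconjρ : σ * ρ * σ⁻¹ = ρ⁻¹ := by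
    rw [hρ, hσinv]
    calc σ * (σ * τ) * σ = τ * σ := by rw [← mul_assoc, ← mul_assoc, hσsq, one_mul]
      _ = (σ * τ)⁻¹ := by rw [mul_inv_rev, hσinv, hτinv]
  have hconjpow : ∀ k : ℤ, σ * ρ ^ k * σ⁻¹ = ρ ^ (-k) := by
    intro k
    have : (MulAut.conj σ) (ρ ^ k) = ((MulAut.conj σ) ρ) ^ k := map_zpow _ _ _
    simp only [MulAut.conj_apply] at this
    rw [this, hconjρ, ← zpow_neg_one, ← zpow_mul]
    congr 1
    ring
  set R := Subgroup.zpowers ρ with hR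
  have hσnormR : σ ∈ Subgroup.normalizer (R : Set G) := by
    rw [Subgroup.mem_normalizer_iff]
    intro x
    constructor
    · rintro ⟨k, rfl⟩
      exact ⟨-k, (hconjpow k).symm⟩
    · rintro ⟨k, hk⟩
      refine ⟨-k, ?_⟩
      show ρ ^ (-k : ℤ) = x
      have hk' : ρ ^ k = σ * x * σ⁻¹ := hk
      rw [← hconjpow k, hk', hσinv,
        show σ * (σ * x * σ) * σ = (σ * σ) * x * (σ * σ) from by group, hσsq, one_mul, mul_one]
  have hρnormR : ρ ∈ Subgroup.normalizer (R : Set G) := Subgroup.le_normalizer (Subgroup.mem_zpowers ρ)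
  have hRnormal : R.Normal := by
    rw [← Subgroup.normalizer_eq_top_iff]
    rw [← top_le_iff, ← hclosure, Subgroup.closure_le]
    rintro x (rfl | rfl)
    · exact hσnormR
    · rw [hτρ]; exact Subgroup.mul_mem _ hσnormR hρnormR
  -- σ is not a power of ρ
  have hσR : σ ∉ R := by
    intro hcon
    have hτR : τ ∈ R := by rw [hτρ]; exact R.mul_mem hcon (Subgroup.mem_zpowers ρ)
    have htop : (⊤ : Subgroup G) ≤ R := by
      rw [← hclosure, Subgroup.closure_le]
      rintro x (rfl | rfl)
      · exact hcon
      · exact hτR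
    obtain ⟨a, ha⟩ := htop (Subgroup.mem_top t)
    obtain ⟨b, hb⟩ := hcon
    have ha' : ρ ^ a = t := ha
    have hb' : ρ ^ b = σ := hb
    apply hτσ
    rw [hτ, ← ha', ← hb', ← zpow_neg, ← zpow_add, ← zpow_add,
      show a + b + -a = b from by ring]
  -- cardinality of G
  have hcardG : Nat.card G = n * 2 := by
    have h1 := Subgroup.index_mul_card (H := H)
    rw [hcardH, hH, MulAction.index_stabilizer_of_transitive] at h1
    exact h1.symm
  -- the index of R is 2
  have hRindex : R.index = 2 := by
    have hne1 : R.index ≠ 1 := by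
      intro hcon
      exact hσR ((Subgroup.index_eq_one.mp hcon) ▸ Subgroup.mem_top σ)
    have hdvd : R.index ∣ 2 := by
      set q : G ⧸ R := QuotientGroup.mk' R σ with hq
      have hmapcl : Subgroup.zpowers q = ⊤ := by
        have h1 : Subgroup.map (QuotientGroup.mk' R) (Subgroup.closure {σ, τ}) = ⊤ := by
          rw [hclosure]
          exact Subgroup.map_top_of_surjective _ (QuotientGroup.mk'_surjective R)
        rw [MonoidHom.map_closure, Set.image_insert_eq, Set.image_singleton] at h1
        have hτq : QuotientGroup.mk' R τ = q := by
          rw [hτρ, map_mul, hq]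
          have : QuotientGroup.mk' R ρ = 1 := by
            rw [← MonoidHom.mem_ker, QuotientGroup.ker_mk']
            exact Subgroup.mem_zpowers ρ
          rw [this, mul_one]
        rw [hτq, Set.pair_eq_singleton, ← Subgroup.zpowers_eq_closure] at h1
        exact h1
      have hcardq : Nat.card (G ⧸ R) = orderOf q := by
        rw [← Nat.card_zpowers, hmapcl, Subgroup.card_top]
      have hq2 : q ^ 2 = 1 := by
        rw [← map_pow, pow_two, hσsq, map_one]
      rw [Subgroup.index_eq_card, hcardq]
      exact orderOf_dvd_of_pow_eq_one hq2
    rcases (Nat.dvd_prime Nat.prime_two).mp hdvd with h | h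
    · exact absurd h hne1
    · exact h
  -- the order of ρ is n
  have hnΩ : Nonempty Ω := ⟨ω⟩
  have hn0 : n ≠ 0 := by
    rw [hn]; exact Nat.card_pos.ne'
  have hρord : orderOf ρ = n := by
    have h1 := Subgroup.index_mul_card (H := R)
    rw [hRindex, Nat.card_zpowers, hcardG] at h1
    omega
  have hn1 : n ≠ 1 := by
    intro hcon
    have : ρ = 1 := orderOf_eq_one_iff.mp (by rw [hρord, hcon])
    apply hτσ
    rw [hτρ, this, mul_one]
  have hn2 : n ≠ 2 := by
    intro hcon
    have hρ2 : ρ * ρ = 1 := by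
      have := pow_orderOf_eq_one ρ
      rwa [hρord, hcon, pow_two] at this
    have hρinv : ρ⁻¹ = ρ := by rw [inv_eq_iff_mul_eq_one, hρ2]
    have hcomm : σ * ρ = ρ * σ := by
      have h1 : σ * ρ * σ⁻¹ = ρ := by rw [hconjρ, hρinv]
      calc σ * ρ = (σ * ρ * σ⁻¹) * σ := by group
        _ = ρ * σ := by rw [h1]
    have hZ : Subgroup.closure {σ, τ} ≤ Subgroup.centralizer {σ} := by
      rw [Subgroup.closure_le]
      rintro x (rfl | rfl)
      · rw [SetLike.mem_coe, Subgroup.mem_centralizer_iff]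
        rintro s rfl
        rfl
      · rw [SetLike.mem_coe, Subgroup.mem_centralizer_iff]
        rintro s rfl
        rw [hτρ, ← mul_assoc, hσsq, one_mul, mul_assoc, ← hcomm, ← mul_assoc, hσsq, one_mul]
    apply ht
    have hmem : t ∈ Subgroup.centralizer {σ} := by
      rw [hclosure] at hZ
      exact hZ (Subgroup.mem_top t)
    exact (Subgroup.mem_centralizer_iff.mp hmem σ rfl).symm
  -- n is prime
  have hprime : n.Prime := by
    by_contra hnp
    obtain ⟨d, hdvd, hd2, hdlt⟩ := Nat.exists_dvd_of_not_prime2 (by omega : 2 ≤ n) hnp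
    set Rd := Subgroup.zpowers (ρ ^ d) with hRd
    have hRdR : Rd ≤ R := by
      rintro z ⟨m, hm⟩
      have hm' : (ρ ^ d) ^ m = z := hm
      refine ⟨d * m, ?_⟩
      show ρ ^ (d * m : ℤ) = z
      rw [← hm', ← zpow_natCast ρ d, ← zpow_mul]
    have hconjRd : ∀ z ∈ Rd, σ * z * σ⁻¹ ∈ Rd := by
      rintro z ⟨m, hm⟩
      have hm' : (ρ ^ d) ^ m = z := hm
      have hz : σ * z * σ⁻¹ = ρ ^ (-(d * m) : ℤ) := by
        rw [← hm', ← zpow_natCast ρ d, ← zpow_mul, hconjpow]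
      refine ⟨-m, ?_⟩
      show (ρ ^ d) ^ (-m : ℤ) = σ * z * σ⁻¹
      rw [hz, ← zpow_natCast ρ d, ← zpow_mul]
      congr 1
      ring
    have hconjRd' : ∀ z ∈ Rd, σ⁻¹ * z * σ ∈ Rd := by
      intro z hz
      have := hconjRd z hz
      rwa [hσinv] at this ⊢
    set M' : Subgroup G :=
      { carrier := {x | x ∈ Rd ∨ σ⁻¹ * x ∈ Rd}
        one_mem' := Or.inl Rd.one_mem
        mul_mem' := by
          rintro a b (ha | ha) (hb | hb)
          · exact Or.inl (Rd.mul_mem ha hb)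
          · refine Or.inr ?_
            have : σ⁻¹ * (a * b) = (σ⁻¹ * a * σ) * (σ⁻¹ * b) := by group
            rw [this]
            exact Rd.mul_mem (hconjRd' a ha) hb
          · refine Or.inr ?_
            have : σ⁻¹ * (a * b) = (σ⁻¹ * a) * b := by group
            rw [this]
            exact Rd.mul_mem ha hb
          · refine Or.inl ?_
            have : a * b = (σ * (σ⁻¹ * a) * σ⁻¹) * (σ * σ) * (σ⁻¹ * b) := by group
            rw [this, hσsq, mul_one]
            exact Rd.mul_mem (hconjRd _ ha) hb
        inv_mem' := by
          rintro a (ha | ha)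
          · exact Or.inl (Rd.inv_mem ha)
          · refine Or.inr ?_
            have hkey : σ⁻¹ * a⁻¹ = σ⁻¹ * (σ⁻¹ * a)⁻¹ * σ * (σ * σ)⁻¹ := by group
            rw [hkey, hσsq, inv_one, mul_one]
            exact hconjRd' _ (Rd.inv_mem ha) } with hM'
    have hHM' : H ≤ M' := by
      intro x hx
      rcases hHmem x hx with rfl | rfl
      · exact Or.inl Rd.one_mem
      · refine Or.inr ?_
        rw [hσinv, hσsq]
        exact Rd.one_mem
    have hρdM' : ρ ^ d ∈ M' := Or.inl (Subgroup.mem_zpowers _)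
    have hρdH : ρ ^ d ∉ H := by
      intro hcon
      rcases hHmem _ hcon with h | h
      · have : n ∣ d := by
          rw [← hρord]
          exact orderOf_dvd_of_pow_eq_one h
        have := Nat.le_of_dvd (by omega) this
        omega
      · exact hσR (h ▸ (hRdR (Subgroup.mem_zpowers _)))
    have hHltM' : H < M' := lt_of_le_of_ne hHM' (fun hcon => hρdH (hcon ▸ hρdM'))
    have hM'top : M' = ⊤ := (hmax ω).2 _ hHltM'
    have hρM' : ρ ∈ M' := hM'top ▸ Subgroup.mem_top ρ
    rcases hρM' with h | h
    · obtain ⟨m, hm⟩ := h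
      have hm0 : (ρ ^ d) ^ m = ρ := hm
      have hm' : ρ ^ (d * m : ℤ) = ρ ^ (1 : ℤ) := by
        rw [zpow_mul, zpow_natCast, hm0, zpow_one]
      have h1 : ρ ^ (d * m - 1 : ℤ) = 1 := by
        rw [zpow_sub, hm', zpow_one, mul_inv_cancel]
      have h2 : ((n : ℤ)) ∣ (d * m - 1) := by
        rw [← hρord]
        exact orderOf_dvd_iff_zpow_eq_one.mpr h1
      have h3 : ((d : ℤ)) ∣ (d * m - 1) := dvd_trans (Int.natCast_dvd_natCast.mpr hdvd) h2
      have h4 : ((d : ℤ)) ∣ 1 := by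
        have h5 : ((d : ℤ)) ∣ (d * m) := Dvd.intro m rfl
        have h6 := dvd_sub h5 h3
        rwa [show (d : ℤ) * m - ((d : ℤ) * m - 1) = 1 from by ring] at h6
      have : (d : ℤ) = 1 := Int.eq_one_of_dvd_one (by positivity) h4
      omega
    · have hσinvρ : σ⁻¹ * ρ ∈ R := hRdR h
      apply hσR
      have : σ = ρ * (σ⁻¹ * ρ)⁻¹ := by group
      rw [this]
      exact R.mul_mem (Subgroup.mem_zpowers ρ) (R.inv_mem hσinvρ)
  have hn3 : 3 ≤ n := by
    have := hprime.two_le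
    omega
  haveI : NeZero n := ⟨hn0⟩
  haveI : Fact (1 < n) := ⟨by omega⟩
  -- build the isomorphism with the dihedral group
  set P : ZMod n → G := fun i => ρ ^ (i.val) with hPdef
  have hPadd : ∀ i j : ZMod n, P (i + j) = P i * P j := by
    intro i j
    show ρ ^ ((i + j).val) = ρ ^ (i.val) * ρ ^ (j.val)
    rw [ZMod.val_add, ← pow_add]
    apply pow_eq_pow_iff_modEq.mpr
    rw [hρord]
    exact Nat.mod_modEq _ _
  have hPzero : P 0 = 1 := by
    show ρ ^ ((0 : ZMod n).val) = 1
    rw [ZMod.val_zero, pow_zero]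
  have hPneg : ∀ i : ZMod n, P (-i) = (P i)⁻¹ := by
    intro i
    have h1 := hPadd (-i) i
    rw [neg_add_cancel, hPzero] at h1
    exact eq_inv_of_mul_eq_one_left h1.symm
  have hPconj : ∀ i : ZMod n, σ * P i * σ⁻¹ = (P i)⁻¹ := by
    intro i
    show σ * ρ ^ (i.val) * σ⁻¹ = (ρ ^ (i.val))⁻¹
    rw [← zpow_natCast ρ i.val, hconjpow, zpow_neg]
  have hswap : ∀ i : ZMod n, P i * σ = σ * P (-i) := by
    intro i
    have h1 := hPconj (-i)
    rw [hPneg, inv_inv] at h1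
    rw [hPneg]
    calc P i * σ = (σ * (P i)⁻¹ * σ⁻¹) * σ := by rw [h1]
      _ = σ * (P i)⁻¹ := by group
  set f : DihedralGroup n → G := fun x => match x with
    | .r i => P i
    | .sr i => σ * P i
    with hf
  have hfmul : ∀ x y : DihedralGroup n, f (x * y) = f x * f y := by
    rintro (i | i) (j | j)
    · show P (i + j) = P i * P j
      exact hPadd i j
    · show σ * P (j - i) = P i * (σ * P j)
      have hrhs : P i * (σ * P j) = (σ * P (-i)) * P j := by
        calc P i * (σ * P j) = (P i * σ) * P j := by group
          _ = (σ * P (-i)) * P j := by rw [hswap]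
      rw [hrhs, mul_assoc, ← hPadd]
      congr 1
      ring
    · show σ * P (i + j) = (σ * P i) * P j
      rw [mul_assoc, hPadd]
    · show P (j - i) = (σ * P i) * (σ * P j)
      have hrhs : (σ * P i) * (σ * P j) = P (-i) * P j := by
        calc (σ * P i) * (σ * P j) = σ * (P i * σ) * P j := by group
          _ = σ * (σ * P (-i)) * P j := by rw [hswap]
          _ = P (-i) * P j := by rw [← mul_assoc, hσsq, one_mul]
      calc P (j - i) = P (-i + j) := by congr 1; ring
        _ = P (-i) * P j := hPadd _ _
        _ = (σ * P i) * (σ * P j) := hrhs.symm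
  set F : DihedralGroup n →* G := MonoidHom.mk' f hfmul with hF
  have hFsurj : Function.Surjective F := by
    have hle : (⊤ : Subgroup G) ≤ F.range := by
      rw [← hclosure, Subgroup.closure_le]
      rintro x (rfl | rfl)
      · refine ⟨DihedralGroup.sr 0, ?_⟩
        show σ * P 0 = σ
        rw [hPzero, mul_one]
      · refine ⟨DihedralGroup.sr 1, ?_⟩
        show σ * P 1 = τ
        have : P 1 = ρ := by
          show ρ ^ ((1 : ZMod n).val) = ρ
          rw [ZMod.val_one, pow_one]
        rw [this, hτρ]
    intro x
    exact hle (Subgroup.mem_top x)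
  have hFbij : Function.Bijective F := by
    rw [Nat.bijective_iff_surjective_and_card]
    refine ⟨hFsurj, ?_⟩
    rw [DihedralGroup.nat_card, hcardG]
    ring
  refine ⟨hprime.odd_of_ne_two hn2, hprime, ⟨(MulEquiv.ofBijective F hFbij).symm⟩⟩
end

section
/- Let G, Ω, v, d, H and N be as in the standing hypotheses. Then there is a bijection between the set of binary relations A ⊆ Ω × Ω for which (Ω, A) is a G-arc-transitive digraph of out-valency d, and the set of cosets (N/H) \ {H}, i.e. the nonidentity elements of the group N/H. -/
open MulAction Subgroup


lemma aux_conj_transfer {G : Type*} [Group G] {S K L : Subgroup G} (hK : K ≤ S) (hL : L ≤ S)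
    (k : S) (h : Subgroup.map (MulAut.conj k).toMonoidHom (K.subgroupOf S) = L.subgroupOf S) :
    Subgroup.map (MulAut.conj (k : G)).toMonoidHom K = L := by
  apply le_antisymm
  · rintro x ⟨y, hy, rfl⟩
    have h1 : (MulAut.conj k).toMonoidHom ⟨y, hK hy⟩ ∈ L.subgroupOf S := by
      rw [← h]; exact Subgroup.mem_map_of_mem _ (show (⟨y, hK hy⟩ : S) ∈ K.subgroupOf S from hy)
    simpa [Subgroup.mem_subgroupOf, MulAut.conj_apply] using h1
  · intro x hx
    have h1 : (⟨x, hL hx⟩ : S) ∈ Subgroup.map (MulAut.conj k).toMonoidHom (K.subgroupOf S) := by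
      rw [h]; exact hx
    rcases h1 with ⟨y, hy, hxy⟩
    refine ⟨(y : G), hy, ?_⟩
    have := congrArg (Subtype.val) hxy
    simpa [MulAut.conj_apply] using this

lemma aux_index_eq {G : Type*} [Group G] [Finite G] {S K L : Subgroup G} (hK : K ≤ S)
    (hL : L ≤ S) (hcard : Nat.card K = Nat.card L) :
    (K.subgroupOf S).index = (L.subgroupOf S).index := by
  have h1 := Subgroup.card_mul_index (K.subgroupOf S)
  have h2 := Subgroup.card_mul_index (L.subgroupOf S)
  rw [Nat.card_congr (Subgroup.subgroupOfEquivOfLe hK).toEquiv] at h1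
  rw [Nat.card_congr (Subgroup.subgroupOfEquivOfLe hL).toEquiv, ← hcard] at h2
  have hpos : 0 < Nat.card K := Nat.card_pos
  exact Nat.eq_of_mul_eq_mul_left hpos (h1.trans h2.symm)

lemma aux_card_conj {G : Type*} [Group G] (K : Subgroup G) (g : G) :
    Nat.card (Subgroup.map (MulAut.conj g).toMonoidHom K) = Nat.card K :=
  (Nat.card_congr (Subgroup.equivMapOfInjective K _ (MulAut.conj g).injective).toEquiv).symm

lemma aux_stabS {G Ω : Type*} [Group G] [MulAction G Ω] (S : Subgroup G) (w : Ω) :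
    MulAction.stabilizer S w = ((S ⊓ MulAction.stabilizer G w).subgroupOf S) := by
  ext s
  simp only [MulAction.mem_stabilizer_iff, Subgroup.mem_subgroupOf, Subgroup.mem_inf]
  exact ⟨fun h => ⟨s.2, h⟩, fun h => h.2⟩

lemma aux_norm_of_map {G : Type*} [Group G] {H : Subgroup G} {m : G}
    (h : Subgroup.map (MulAut.conj m).toMonoidHom H = H) : m ∈ (Subgroup.normalizer (H : Set G)) := by
  intro y
  constructor
  · intro hy
    have := Subgroup.mem_map_of_mem (MulAut.conj m).toMonoidHom hy
    rw [h] at this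
    simpa [MulAut.conj_apply] using this
  · intro hy
    rw [← h] at hy
    rcases hy with ⟨z, hz, hzy⟩
    have : z = y := (MulAut.conj m).injective (by simpa [MulAut.conj_apply] using hzy)
    rwa [← this]

lemma aux_point_unique {G Ω : Type*} [Group G] [MulAction G Ω] [Finite Ω] [FaithfulSMul G Ω]
    (htrans : MulAction.IsPretransitive G Ω)
    (hprim : ∀ ω : Ω, IsCoatom (MulAction.stabilizer G ω))
    (hnonreg : ∃ ω : Ω, MulAction.stabilizer G ω ≠ ⊥)
    (v w : Ω) (hle : MulAction.stabilizer G v ≤ MulAction.stabilizer G w) : w = v := by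
  have : Finite G := Finite.of_injective _ (MulAction.toPerm_injective (α := G) (β := Ω))
  set S := MulAction.stabilizer G v with hS
  have hSnt : S ≠ ⊥ := by
    intro hbot
    obtain ⟨ω, hω⟩ := hnonreg
    obtain ⟨g, hg⟩ := htrans.exists_smul_eq v ω
    rw [← hg, MulAction.stabilizer_smul_eq_stabilizer_map_conj, ← hS, hbot,
      Subgroup.map_bot] at hω
    exact hω rfl
  have hnorm : (Subgroup.normalizer (S : Set G)) = S := by
    rcases eq_or_lt_of_le S.le_normalizer with he | hl
    · exact he.symm
    · exfalso
      have htop : (Subgroup.normalizer (S : Set G)) = ⊤ := (hprim v).2 _ hl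
      have hN : S.Normal := Subgroup.normalizer_eq_top_iff.mp htop
      apply hSnt
      rw [eq_bot_iff]
      intro s hs
      have hfix : ∀ x : Ω, s • x = x := by
        intro x
        obtain ⟨g, hg⟩ := htrans.exists_smul_eq v x
        have hmem : g⁻¹ * s * g ∈ S := hN.conj_mem' s hs g
        have h2 : (g⁻¹ * s * g) • v = v := hmem
        rw [← hg, ← mul_smul]
        calc (s * g) • v = (g * (g⁻¹ * s * g)) • v := by group
        _ = g • v := by rw [mul_smul, h2]
      have : s = 1 := by
        apply FaithfulSMul.eq_of_smul_eq_smul (α := Ω)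
        intro x; rw [hfix x, one_smul]
      simp [this]
  obtain ⟨g, hg⟩ := htrans.exists_smul_eq v w
  have hsm : MulAction.stabilizer G w = Subgroup.map (MulAut.conj g).toMonoidHom S := by
    rw [← hg, MulAction.stabilizer_smul_eq_stabilizer_map_conj]
  have hcard : Nat.card (MulAction.stabilizer G w) ≤ Nat.card S := by
    rw [hsm, aux_card_conj]
  have heq : S = MulAction.stabilizer G w := Subgroup.eq_of_le_of_card_ge hle hcard
  have hgmem : g ∈ (Subgroup.normalizer (S : Set G)) := by
    apply aux_norm_of_map
    rw [← hsm, ← heq]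
  rw [hnorm] at hgmem
  rw [← hg]
  exact hgmem

/-- The digraph with arc-set `A` is `G`-arc-transitive: the action of `G` preserves `A`
and is transitive on `A`. -/
def IsGArcTransitiveDigraph (G : Type*) {Ω : Type*} [Group G] [MulAction G Ω]
    (A : Set (Ω × Ω)) : Prop :=
  (∀ (g : G), ∀ p ∈ A, (g • (Prod.fst p), g • (Prod.snd p)) ∈ A) ∧
    (∀ p ∈ A, ∀ q ∈ A, ∃ g : G, g • (Prod.fst p) = Prod.fst q ∧ g • (Prod.snd p) = Prod.snd q)

/-- The digraph with arc-set `A` has out-valency `d`: every vertex has exactly `d`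
out-neighbours. -/
def HasOutValency {Ω : Type*} (A : Set (Ω × Ω)) (d : ℕ) : Prop :=
  ∀ x : Ω, {y : Ω | (x, y) ∈ A}.ncard = d

theorem stmt_2 (G Ω : Type*) [Group G] [MulAction G Ω] [Finite Ω] [FaithfulSMul G Ω]
    -- G acts primitively (transitively with maximal point stabilizers) ...
    (htrans : MulAction.IsPretransitive G Ω)
    (hprim : ∀ ω : Ω, IsCoatom (MulAction.stabilizer G ω))
    -- ... and non-regularly
    (hnonreg : ∃ ω : Ω, MulAction.stabilizer G ω ≠ ⊥)
    (v : Ω) (d : ℕ) (hd : 2 ≤ d)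
    -- G_v has a unique conjugacy class of subgroups of index d ...
    (hconj : ∀ K L : Subgroup (MulAction.stabilizer G v), K.index = d → L.index = d →
      ∃ g : (MulAction.stabilizer G v), Subgroup.map (MulAut.conj g).toMonoidHom K = L)
    -- ... and these subgroups are maximal and self-normalising in G_v
    (hmax : ∀ K : Subgroup (MulAction.stabilizer G v), K.index = d → IsCoatom K)
    (hself : ∀ K : Subgroup (MulAction.stabilizer G v), K.index = d → Subgroup.normalizer (K : Set (MulAction.stabilizer G v)) = K)
    -- H is such a subgroup of index d in G_v
    (H : Subgroup G) (hHle : H ≤ MulAction.stabilizer G v)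
    (hHidx : (H.subgroupOf (MulAction.stabilizer G v)).index = d) :
    -- bijection between G-arc-transitive digraphs of out-valency d and
    -- non-identity elements of N/H, where N = N_G(H)
    Nonempty
      ({A : Set (Ω × Ω) // IsGArcTransitiveDigraph G A ∧ HasOutValency A d} ≃
        {x : Subgroup.normalizer (H : Set G) ⧸ H.subgroupOf (Subgroup.normalizer (H : Set G)) // x ≠ 1}) := by
    classical
  have hfinG : Finite G := Finite.of_injective _ (MulAction.toPerm_injective (α := G) (β := Ω))
  set S := MulAction.stabilizer G v with hSdef
  -- N ⊓ S = H
  have hNS : ∀ x : G, x ∈ (Subgroup.normalizer (H : Set G)) → x ∈ S → x ∈ H := by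
    intro x hxN hxS
    have hmem : (⟨x, hxS⟩ : S) ∈ (Subgroup.normalizer ((H.subgroupOf S) : Set S)) := by
      intro h
      simp only [SetLike.mem_coe, Subgroup.mem_subgroupOf, Subgroup.coe_mul, InvMemClass.coe_inv]
      exact hxN (h : G)
    rw [hself _ hHidx] at hmem
    exact hmem
  -- v is not a "good" point
  have hvnot : ¬ (S ⊓ MulAction.stabilizer G v = H) := by
    intro hcon
    rw [← hSdef, inf_idem] at hcon
    have h1 : (H.subgroupOf S).index = 1 := by
      rw [← hcon, Subgroup.subgroupOf_self, Subgroup.index_top]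
    omega
  -- forward: elements of the normalizer give good points
  have hfwd : ∀ n : G, n ∈ (Subgroup.normalizer (H : Set G)) → n ∉ H →
      S ⊓ MulAction.stabilizer G (n • v) = H := by
    intro n hnN hnH
    have hHle2 : H ≤ S ⊓ MulAction.stabilizer G (n • v) := by
      intro h hh
      refine ⟨hHle hh, ?_⟩
      have h2 : n⁻¹ * h * n ∈ H := by
        have h3 := (Subgroup.inv_mem_iff (Subgroup.normalizer (H : Set G))).mpr hnN
        have := (h3 h).mp hh
        simpa using this
      show h • (n • v) = n • v
      have h3 : (n⁻¹ * h * n) • v = v := hHle h2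
      rw [← mul_smul]
      calc (h * n) • v = (n * (n⁻¹ * h * n)) • v := by group
      _ = n • v := by rw [mul_smul, h3]
    set K := S ⊓ MulAction.stabilizer G (n • v) with hKdef
    have hKS : K ≤ S := inf_le_left
    have hsub : H.subgroupOf S ≤ K.subgroupOf S := fun x hx => hHle2 hx
    rcases eq_or_lt_of_le hsub with he | hl
    · apply le_antisymm _ hHle2
      intro x hx
      have h1 : (⟨x, hKS hx⟩ : S) ∈ K.subgroupOf S := hx
      rw [← he] at h1
      exact h1
    · exfalso
      have htop := (hmax _ hHidx).2 _ hl
      have hSK : S ≤ MulAction.stabilizer G (n • v) := by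
        intro x hx
        have h1 : (⟨x, hx⟩ : S) ∈ K.subgroupOf S := htop ▸ Subgroup.mem_top _
        exact (h1 : x ∈ K).2
      have hnv : n • v = v := aux_point_unique htrans hprim hnonreg v (n • v) hSK
      exact hnH (hNS n hnN hnv)
  -- backward: good points come from the normalizer
  have hbwd : ∀ w : Ω, S ⊓ MulAction.stabilizer G w = H →
      ∃ n : G, n ∈ (Subgroup.normalizer (H : Set G)) ∧ n • v = w := by
    intro w hw
    obtain ⟨g, hg⟩ := htrans.exists_smul_eq v w
    have hHw : H ≤ MulAction.stabilizer G w := by rw [← hw]; exact inf_le_right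
    set K := Subgroup.map (MulAut.conj g⁻¹).toMonoidHom H with hKdef
    have hKS : K ≤ S := by
      rintro x ⟨h, hh, rfl⟩
      show ((MulAut.conj g⁻¹).toMonoidHom h) • v = v
      have h1 : h • (g • v) = g • v := by rw [hg]; exact hHw hh
      simp only [MulAut.conj_apply, MulEquiv.coe_toMonoidHom, inv_inv]
      rw [mul_smul, mul_smul, h1, inv_smul_smul]
    have hKidx : (K.subgroupOf S).index = d := by
      rw [aux_index_eq hKS hHle (by rw [hKdef, aux_card_conj])]
      exact hHidx
    obtain ⟨k, hk⟩ := hconj (K.subgroupOf S) (H.subgroupOf S) hKidx hHidx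
    have hkG := aux_conj_transfer hKS hHle k hk
    have hmm : Subgroup.map (MulAut.conj ((k : G) * g⁻¹)).toMonoidHom H = H := by
      have h5 : Subgroup.map (MulAut.conj (k : G)).toMonoidHom
          (Subgroup.map (MulAut.conj g⁻¹).toMonoidHom H) = H := hkG
      rw [Subgroup.map_map] at h5
      rw [← h5]
      congr 1
      ext x
      simp [MulAut.conj_apply, mul_assoc]
    have hm : ((k : G) * g⁻¹) ∈ (Subgroup.normalizer (H : Set G)) := aux_norm_of_map hmm
    refine ⟨((k : G) * g⁻¹)⁻¹, Subgroup.inv_mem _ hm, ?_⟩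
    have h4 : ((k : G))⁻¹ • v = v := S.inv_mem k.2
    rw [mul_inv_rev, inv_inv, mul_smul, h4, hg]
  -- the subtype of good points
  let W := {w : Ω // S ⊓ MulAction.stabilizer G w = H}
  -- the map from the quotient to Ω
  let fQ : ((Subgroup.normalizer (H : Set G)) ⧸ H.subgroupOf (Subgroup.normalizer (H : Set G))) → Ω := fun x =>
    Quotient.liftOn' x (fun n => (n : G) • v) (by
      intro a b hab
      have h1 : (a : G)⁻¹ * b ∈ H := by
        have h2 := QuotientGroup.leftRel_apply.mp hab
        simpa [Subgroup.mem_subgroupOf] using h2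
      have h2 : ((a : G)⁻¹ * b) • v = v := hHle h1
      show (a : G) • v = (b : G) • v
      calc (a : G) • v = (a : G) • (((a : G)⁻¹ * b) • v) := by rw [h2]
      _ = (b : G) • v := by rw [← mul_smul]; group)
  -- Ψ : nontrivial cosets → good points
  have hΨmem : ∀ x : {x : (Subgroup.normalizer (H : Set G)) ⧸ H.subgroupOf (Subgroup.normalizer (H : Set G)) // x ≠ 1},
      S ⊓ MulAction.stabilizer G (fQ x.1) = H := by
    rintro ⟨x, hx⟩
    revert hx
    refine Quotient.inductionOn' x ?_
    intro n hn1
    have hnH : (n : G) ∉ H := by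
      intro hmem
      exact hn1 ((QuotientGroup.eq_one_iff n).mpr (Subgroup.mem_subgroupOf.mpr hmem))
    exact hfwd (n : G) n.2 hnH
  let Ψ : {x : (Subgroup.normalizer (H : Set G)) ⧸ H.subgroupOf (Subgroup.normalizer (H : Set G)) // x ≠ 1} → W :=
    fun x => ⟨fQ x.1, hΨmem x⟩
  have hfQinj : Function.Injective fQ := by
    intro x y
    refine Quotient.inductionOn₂' x y ?_
    intro a b hab
    have h1 : (a : G)⁻¹ * b ∈ S := by
      show ((a : G)⁻¹ * (b : G)) • v = v
      have hab' : (a : G) • v = (b : G) • v := hab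
      rw [mul_smul, ← hab', inv_smul_smul]
    have h2 : (a : G)⁻¹ * (b : G) ∈ H := hNS _ (mul_mem (inv_mem a.2) b.2) h1
    apply Quotient.sound'
    rw [QuotientGroup.leftRel_apply]
    exact Subgroup.mem_subgroupOf.mpr (by push_cast; exact h2)
  have hΨinj : Function.Injective Ψ := by
    intro x y hxy
    exact Subtype.ext (hfQinj (congrArg Subtype.val hxy))
  have hΨsurj : Function.Surjective Ψ := by
    rintro ⟨w, hw⟩
    obtain ⟨n, hnN, hnv⟩ := hbwd w hw
    refine ⟨⟨QuotientGroup.mk ⟨n, hnN⟩, ?_⟩, ?_⟩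
    · intro h1
      have h2 : (⟨n, hnN⟩ : (Subgroup.normalizer (H : Set G))) ∈ H.subgroupOf (Subgroup.normalizer (H : Set G)) :=
        (QuotientGroup.eq_one_iff _).mp h1
      have hnH : n ∈ H := Subgroup.mem_subgroupOf.mp h2
      have h3 : n • v = v := hHle hnH
      rw [← hnv, h3] at hw
      exact hvnot hw
    · apply Subtype.ext
      show fQ (QuotientGroup.mk ⟨n, hnN⟩) = w
      exact hnv
  -- digraph construction
  let Aset : Ω → Set (Ω × Ω) := fun w => {p | ∃ g : G, g • v = p.1 ∧ g • w = p.2}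
  have hA1 : ∀ w : Ω, IsGArcTransitiveDigraph G (Aset w) := by
    intro w
    constructor
    · rintro g p ⟨h, h1, h2⟩
      exact ⟨g * h, by rw [mul_smul, h1], by rw [mul_smul, h2]⟩
    · rintro p ⟨h, h1, h2⟩ q ⟨h', h1', h2'⟩
      refine ⟨h' * h⁻¹, ?_, ?_⟩
      · rw [← h1, ← h1', ← mul_smul, mul_assoc, inv_mul_cancel, mul_one]
      · rw [← h2, ← h2', ← mul_smul, mul_assoc, inv_mul_cancel, mul_one]
  -- the out-neighbourhood is a translated S-orbit
  have hnbhd : ∀ (w : Ω) (g : G) (x : Ω), g • v = x →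
      {y : Ω | (x, y) ∈ Aset w} = (fun z => g • z) '' (MulAction.orbit S w) := by
    intro w g x hg
    ext y
    simp only [Set.mem_setOf_eq, Set.mem_image]
    constructor
    · rintro ⟨h, h1, h2⟩
      have hmem : g⁻¹ * h ∈ S := by
        show (g⁻¹ * h) • v = v
        rw [mul_smul, h1, ← hg, inv_smul_smul]
      refine ⟨(g⁻¹ * h) • w, ⟨(⟨g⁻¹ * h, hmem⟩ : S), rfl⟩, ?_⟩
      rw [← mul_smul, mul_inv_cancel_left]
      exact h2
    · rintro ⟨z, ⟨s, rfl⟩, rfl⟩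
      refine ⟨g * (s : G), ?_, ?_⟩
      · rw [mul_smul, (s.2 : (s : G) • v = v), hg]
      · rw [mul_smul]; rfl
  have hout : ∀ w : Ω, S ⊓ MulAction.stabilizer G w = H → HasOutValency (Aset w) d := by
    intro w hw x
    obtain ⟨g, hg⟩ := htrans.exists_smul_eq v x
    rw [hnbhd w g x hg, Set.ncard_image_of_injective _ (MulAction.injective g),
      ← MulAction.index_stabilizer, aux_stabS, hw]
    exact hHidx
  let Φ : W → {A : Set (Ω × Ω) // IsGArcTransitiveDigraph G A ∧ HasOutValency A d} :=
    fun w => ⟨Aset w.1, hA1 w.1, hout w.1 w.2⟩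
  have hΦinj : Function.Injective Φ := by
    rintro ⟨w, hw⟩ ⟨w', hw'⟩ h
    have hAA : Aset w = Aset w' := congrArg Subtype.val h
    apply Subtype.ext
    have h1 : ((v, w') : Ω × Ω) ∈ Aset w := by
      rw [hAA]; exact ⟨1, one_smul _ _, one_smul _ _⟩
    obtain ⟨g, hg1, hg2⟩ := h1
    have hg1' : g • v = v := hg1
    have hg2' : g • w = w' := hg2
    have hgS : g ∈ S := hg1'
    have key : ∀ z : G, z ∈ H ↔ z ∈ S ∧ z • w = w := by
      intro z
      rw [← hw, Subgroup.mem_inf]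
      exact Iff.rfl
    have key' : ∀ z : G, z ∈ H ↔ z ∈ S ∧ z • w' = w' := by
      intro z
      rw [← hw', Subgroup.mem_inf]
      exact Iff.rfl
    have hgN : g ∈ (Subgroup.normalizer (H : Set G)) := by
      intro y
      rw [SetLike.mem_coe, SetLike.mem_coe, key y, key' (g * y * g⁻¹)]
      constructor
      · rintro ⟨hyS, hyw⟩
        refine ⟨mul_mem (mul_mem hgS hyS) (inv_mem hgS), ?_⟩
        rw [← hg2']
        simp [mul_smul, inv_smul_smul, hyw]
      · rintro ⟨hS2, hw2⟩
        have hyS : y ∈ S := by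
          have hy2 : y = g⁻¹ * (g * y * g⁻¹) * g := by group
          rw [hy2]
          exact mul_mem (mul_mem (inv_mem hgS) hS2) hgS
        refine ⟨hyS, ?_⟩
        rw [← hg2'] at hw2
        have h3 : g • (y • w) = g • w := by
          simpa [mul_smul, inv_smul_smul] using hw2
        exact MulAction.injective g h3
    have hgH : g ∈ H := hNS g hgN hgS
    have hgw : g • w = w := ((key g).mp hgH).2
    show w = w'
    rw [← hg2', hgw]
  have hΦsurj : Function.Surjective Φ := by
    rintro ⟨A, hAT, hAV⟩
    have hne : {y : Ω | (v, y) ∈ A}.Nonempty := by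
      apply Set.nonempty_of_ncard_ne_zero
      rw [hAV v]; omega
    obtain ⟨u, hu⟩ := hne
    have hAu : A = Aset u := by
      ext p
      constructor
      · intro hp
        obtain ⟨g, h1, h2⟩ := hAT.2 (v, u) hu p hp
        exact ⟨g, h1, h2⟩
      · rintro ⟨g, h1, h2⟩
        have h3 := hAT.1 g (v, u) hu
        have h4 : ((g • v, g • u) : Ω × Ω) = p := Prod.ext h1 h2
        rwa [h4] at h3
    have hidxu : ((S ⊓ MulAction.stabilizer G u).subgroupOf S).index = d := by
      have h1 : {y : Ω | (v, y) ∈ A}.ncard = d := hAV v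
      rw [hAu, hnbhd u 1 v (one_smul _ _),
        Set.ncard_image_of_injective _ (MulAction.injective (1 : G)),
        ← MulAction.index_stabilizer, aux_stabS] at h1
      exact h1
    obtain ⟨k, hk⟩ := hconj _ _ hidxu hHidx
    have hkG := aux_conj_transfer inf_le_left hHle k hk
    set w := (k : G) • u with hwdef
    have hwW : S ⊓ MulAction.stabilizer G w = H := by
      rw [← hkG]
      ext y
      simp only [Subgroup.mem_inf, Subgroup.mem_map]
      constructor
      · rintro ⟨hyS, hyw⟩
        refine ⟨(k : G)⁻¹ * y * (k : G),
          ⟨mul_mem (mul_mem (inv_mem k.2) hyS) k.2, ?_⟩, ?_⟩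
        · show ((k : G)⁻¹ * y * (k : G)) • u = u
          have h5 : y • ((k : G) • u) = (k : G) • u := hyw
          simp [mul_smul, h5]
        · simp only [MulAut.conj_apply, MulEquiv.coe_toMonoidHom]
          group
      · rintro ⟨z, ⟨hzS, hzu⟩, rfl⟩
        have h5 : z • u = u := hzu
        constructor
        · simp only [MulAut.conj_apply, MulEquiv.coe_toMonoidHom]
          exact mul_mem (mul_mem k.2 hzS) (inv_mem k.2)
        · simp only [MulAut.conj_apply, MulEquiv.coe_toMonoidHom,
            MulAction.mem_stabilizer_iff, hwdef]
          simp [mul_smul, h5]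
    refine ⟨⟨w, hwW⟩, ?_⟩
    apply Subtype.ext
    show Aset w = A
    rw [hAu]
    ext p
    constructor
    · rintro ⟨g, h1, h2⟩
      refine ⟨g * (k : G), ?_, ?_⟩
      · rw [mul_smul, (k.2 : (k : G) • v = v), h1]
      · rw [mul_smul, ← hwdef, h2]
    · rintro ⟨g, h1, h2⟩
      refine ⟨g * (k : G)⁻¹, ?_, ?_⟩
      · rw [mul_smul, (S.inv_mem k.2 : (k : G)⁻¹ • v = v), h1]
      · rw [mul_smul, hwdef, inv_smul_smul, h2]
  exact ⟨(Equiv.ofBijective Φ ⟨hΦinj, hΦsurj⟩).symm.trans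
    (Equiv.ofBijective Ψ ⟨hΨinj, hΨsurj⟩).symm⟩
end

section
/- Let G, Ω, v, d, H and N be as in the standing hypotheses. Then there exists a symmetric irreflexive relation A ⊆ Ω × Ω such that (Ω, A) is a G-arc-transitive graph of valency d if and only if the group N/H contains an element of order 2. -/
namespace Stmt3Aux

variable {G Ω : Type*} [Group G] [MulAction G Ω]

theorem conj_mem_stab_iff (g x : G) (w : Ω) :
    g * x * g⁻¹ ∈ MulAction.stabilizer G w ↔ x ∈ MulAction.stabilizer G (g⁻¹ • w) := by
  simp only [MulAction.mem_stabilizer_iff, mul_smul]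
  constructor
  · intro h
    have := congrArg (fun z => g⁻¹ • z) h
    simpa [smul_smul] using this
  · intro h
    rw [h]
    simp [smul_smul]

theorem liftConj {S K H : Subgroup G} (hK : K ≤ S) (a : S)
    (h : Subgroup.map (MulAut.conj a).toMonoidHom (K.subgroupOf S) = H.subgroupOf S)
    (hH : H ≤ S) (x : G) : x ∈ H ↔ (a : G)⁻¹ * x * (a : G) ∈ K := by
  constructor
  · intro hx
    have hxS : x ∈ S := hH hx
    have : (⟨x, hxS⟩ : S) ∈ H.subgroupOf S := hx
    rw [← h] at this
    obtain ⟨k, hk, hak⟩ := this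
    have hco : (a : G) * (k : G) * (a : G)⁻¹ = x := congrArg Subtype.val hak
    have hkK : (k : G) ∈ K := hk
    have : (a : G)⁻¹ * x * (a : G) = (k : G) := by rw [← hco]; group
    rw [this]; exact hkK
  · intro hx
    have hxS : x ∈ S := by
      have h1 : (a : G) * ((a : G)⁻¹ * x * (a : G)) * (a : G)⁻¹ ∈ S :=
        S.mul_mem (S.mul_mem a.2 (hK hx)) (S.inv_mem a.2)
      have h2 : (a : G) * ((a : G)⁻¹ * x * (a : G)) * (a : G)⁻¹ = x := by group
      rwa [h2] at h1
    have hk : (a⁻¹ * ⟨x, hxS⟩ * a : S) ∈ K.subgroupOf S := by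
      have : ((a⁻¹ * ⟨x, hxS⟩ * a : S) : G) = (a : G)⁻¹ * x * (a : G) := rfl
      simpa [Subgroup.mem_subgroupOf, this] using hx
    have : (MulAut.conj a) (a⁻¹ * ⟨x, hxS⟩ * a) ∈
        Subgroup.map (MulAut.conj a).toMonoidHom (K.subgroupOf S) :=
      Subgroup.mem_map_of_mem _ hk
    rw [h] at this
    have he : (MulAut.conj a) (a⁻¹ * ⟨x, hxS⟩ * a) = (⟨x, hxS⟩ : S) := by
      simp [MulAut.conj_apply]; group
    rw [he] at this
    exact this

theorem liftSelf {S H : Subgroup G} (hH : H ≤ S)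
    (hself : Subgroup.normalizer ((H.subgroupOf S : Subgroup S) : Set S) = H.subgroupOf S) {g : G}
    (hgN : g ∈ (Subgroup.normalizer (H : Set G))) (hgS : g ∈ S) : g ∈ H := by
  have : (⟨g, hgS⟩ : S) ∈ Subgroup.normalizer ((H.subgroupOf S : Subgroup S) : Set S) := by
    rw [Subgroup.mem_normalizer_iff]
    intro t
    have h1 := (Subgroup.mem_normalizer_iff.mp hgN) (t : G)
    simp only [Subgroup.mem_subgroupOf]
    exact ⟨fun ht => h1.mp ht, fun ht => h1.mpr ht⟩
  rw [hself] at this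
  exact this

theorem stab_proper [FaithfulSMul G Ω]
    (htrans : MulAction.IsPretransitive G Ω)
    (hprim : ∀ ω : Ω, IsCoatom (MulAction.stabilizer G ω))
    (hnonreg : ∃ ω : Ω, MulAction.stabilizer G ω ≠ ⊥)
    (v w : Ω) (hvw : w ≠ v) : ¬ (MulAction.stabilizer G v ≤ MulAction.stabilizer G w) := by
  intro hle
  have heq : MulAction.stabilizer G v = MulAction.stabilizer G w := by
    rcases eq_or_lt_of_le hle with h | h
    · exact h
    · exact absurd ((hprim v).2 _ h) (hprim w).1
  obtain ⟨g, hg⟩ := htrans.exists_smul_eq v w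
  have hntv : MulAction.stabilizer G v ≠ ⊥ := by
    intro hbot
    obtain ⟨ω, hω⟩ := hnonreg
    obtain ⟨c, hc⟩ := htrans.exists_smul_eq v ω
    apply hω
    rw [← hc, MulAction.stabilizer_smul_eq_stabilizer_map_conj, hbot, Subgroup.map_bot]
  have hnn : Subgroup.normalizer (MulAction.stabilizer G v : Set G) ≠ ⊤ := by
    intro htop
    have hnorm : (MulAction.stabilizer G v).Normal := by
      rw [← Subgroup.normalizer_eq_top_iff]; exact htop
    apply hntv
    rw [Subgroup.eq_bot_iff_forall]
    intro s hs
    apply FaithfulSMul.eq_of_smul_eq_smul (α := Ω)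
    intro ω
    obtain ⟨c, hc⟩ := htrans.exists_smul_eq v ω
    have hmem : c⁻¹ * s * c ∈ MulAction.stabilizer G v := by
      have := hnorm.conj_mem s hs c⁻¹
      simpa using this
    have hfix : (c⁻¹ * s * c) • v = v := hmem
    rw [one_smul, ← hc]
    calc s • c • v = c • (c⁻¹ * s * c) • v := by simp [smul_smul, mul_assoc]
    _ = c • v := by rw [hfix]
  have hNeq : Subgroup.normalizer (MulAction.stabilizer G v : Set G) = MulAction.stabilizer G v := by
    rcases eq_or_lt_of_le (Subgroup.le_normalizer (H := MulAction.stabilizer G v)) with h | h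
    · exact h.symm
    · exact absurd ((hprim v).2 _ h) hnn
  have hgnorm : g ∈ Subgroup.normalizer (MulAction.stabilizer G v : Set G) := by
    rw [Subgroup.mem_normalizer_iff]
    intro h
    have hvinv : g⁻¹ • w = v := by rw [← hg]; simp
    have hiff := conj_mem_stab_iff g h w
    rw [hvinv] at hiff
    rw [← heq] at hiff
    exact hiff.symm
  rw [hNeq] at hgnorm
  exact hvw (by rw [← hg, hgnorm])

end Stmt3Aux

private theorem stmt_3_aux (G Ω : Type*) [Group G] [MulAction G Ω] [Finite Ω] [FaithfulSMul G Ω]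
    (htrans : MulAction.IsPretransitive G Ω)
    (hprim : ∀ ω : Ω, IsCoatom (MulAction.stabilizer G ω))
    (hnonreg : ∃ ω : Ω, MulAction.stabilizer G ω ≠ ⊥)
    (v : Ω) (d : ℕ) (hd : 2 ≤ d)
    (hconj : ∀ K L : Subgroup (MulAction.stabilizer G v), K.index = d → L.index = d →
      ∃ g : (MulAction.stabilizer G v), Subgroup.map (MulAut.conj g).toMonoidHom K = L)
    (hmax : ∀ K : Subgroup (MulAction.stabilizer G v), K.index = d → IsCoatom K)
    (hself : ∀ K : Subgroup (MulAction.stabilizer G v), K.index = d → Subgroup.normalizer (K : Set (MulAction.stabilizer G v)) = K)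
    (H : Subgroup G) (hHle : H ≤ MulAction.stabilizer G v)
    (hHidx : (H.subgroupOf (MulAction.stabilizer G v)).index = d) :
    (∃ A : Set (Ω × Ω), (∀ x y : Ω, (x, y) ∈ A → (y, x) ∈ A) ∧ (∀ x : Ω, (x, x) ∉ A) ∧
        ((∀ (g : G), ∀ p ∈ A, (g • (Prod.fst p), g • (Prod.snd p)) ∈ A) ∧
    (∀ p ∈ A, ∀ q ∈ A, ∃ g : G, g • (Prod.fst p) = Prod.fst q ∧ g • (Prod.snd p) = Prod.snd q)) ∧ (∀ x : Ω, {y : Ω | (x, y) ∈ A}.ncard = d)) ↔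
      (∃ x : Subgroup.normalizer (H : Set G) ⧸ H.subgroupOf (Subgroup.normalizer (H : Set G)), orderOf x = 2) := by
  classical
  set S := MulAction.stabilizer G v with hSdef
  have hselfH := hself (H.subgroupOf S) hHidx
  constructor
  · rintro ⟨A, hsym, hirr, ⟨hinv, htA⟩, hval⟩
    obtain ⟨w, hw⟩ : {y : Ω | (v, y) ∈ A}.Nonempty := by
      rw [Set.nonempty_iff_ne_empty]
      intro he
      have := hval v
      rw [he, Set.ncard_empty] at this
      omega
    have hw : (v, w) ∈ A := hw
    have hwv : w ≠ v := fun h => hirr v (by rwa [h] at hw)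
    have horb : MulAction.orbit S w = {y : Ω | (v, y) ∈ A} := by
      ext y
      constructor
      · rintro ⟨s, rfl⟩
        have h1 : (s : G) • v = v := s.2
        have h2 := hinv (s : G) (v, w) hw
        simp only [h1] at h2
        simpa [Subgroup.smul_def] using h2
      · intro hy
        obtain ⟨g, hg1, hg2⟩ := htA (v, w) hw (v, y) hy
        exact ⟨⟨g, hg1⟩, by simpa [Subgroup.smul_def] using hg2⟩
    have hidxw : (MulAction.stabilizer S w).index = d := by
      rw [MulAction.index_stabilizer, horb]; exact hval v
    set K : Subgroup G := MulAction.stabilizer G v ⊓ MulAction.stabilizer G w with hKdef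
    have hKsub : K.subgroupOf S = MulAction.stabilizer S w := by
      ext s
      simp only [Subgroup.mem_subgroupOf, hKdef, Subgroup.mem_inf,
        MulAction.mem_stabilizer_iff, Subgroup.smul_def]
      have : (s : G) ∈ S := s.2
      exact ⟨fun h => h.2, fun h => ⟨this, h⟩⟩
    have hKidx : (K.subgroupOf S).index = d := by rw [hKsub]; exact hidxw
    obtain ⟨a, ha⟩ := hconj (K.subgroupOf S) (H.subgroupOf S) hKidx hHidx
    have hHiff : ∀ x : G, x ∈ H ↔ (a : G)⁻¹ * x * (a : G) ∈ K :=
      Stmt3Aux.liftConj inf_le_left a ha hHle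
    obtain ⟨g, hga, hgb⟩ := htA (v, w) hw (w, v) (hsym v w hw)
    have hg1 : g • v = w := hga
    have hg2 : g • w = v := hgb
    have hginv_v : g⁻¹ • v = w := by rw [← hg2]; simp
    have hginv_w : g⁻¹ • w = v := by rw [← hg1]; simp
    have hgK : ∀ y : G, y ∈ K ↔ g * y * g⁻¹ ∈ K := by
      intro y
      rw [hKdef, Subgroup.mem_inf, Subgroup.mem_inf,
        Stmt3Aux.conj_mem_stab_iff g y v, Stmt3Aux.conj_mem_stab_iff g y w, hginv_v, hginv_w]
      tauto
    have hgnot : g ∉ K := by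
      intro h
      have : g • v = v := (Subgroup.mem_inf.mp h).1
      exact hwv (by rw [← hg1, this])
    have hg2K : g * g ∈ K := by
      rw [hKdef, Subgroup.mem_inf]
      constructor
      · show (g * g) • v = v
        rw [mul_smul, hg1, hg2]
      · show (g * g) • w = w
        rw [mul_smul, hg2, hg1]
    set b : G := (a : G) * g * (a : G)⁻¹ with hb
    have hkey : ∀ x : G, (a : G)⁻¹ * (b * x * b⁻¹) * (a : G)
        = g * ((a : G)⁻¹ * x * (a : G)) * g⁻¹ := by
      intro x; rw [hb]; group
    have hbN : b ∈ (Subgroup.normalizer (H : Set G)) := by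
      rw [Subgroup.mem_normalizer_iff]
      intro h
      rw [hHiff h, hHiff (b * h * b⁻¹), hkey, ← hgK]
    have hbH : b ∉ H := by
      intro h
      rw [hHiff] at h
      have he : (a : G)⁻¹ * b * (a : G) = g := by rw [hb]; group
      rw [he] at h
      exact hgnot h
    have hb2 : b * b ∈ H := by
      rw [hHiff]
      have he : (a : G)⁻¹ * (b * b) * (a : G) = g * (g * 1) := by rw [hb]; group
      rw [he, mul_one]
      exact hg2K
    refine ⟨QuotientGroup.mk (⟨b, hbN⟩ : (Subgroup.normalizer (H : Set G))), ?_⟩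
    haveI : Fact (Nat.Prime 2) := ⟨Nat.prime_two⟩
    apply orderOf_eq_prime
    · rw [← QuotientGroup.mk_pow, QuotientGroup.eq_one_iff]
      have : ((⟨b, hbN⟩ : (Subgroup.normalizer (H : Set G))) ^ 2 : (Subgroup.normalizer (H : Set G))) = ⟨b * b, by
        simpa [pow_two] using (Subgroup.normalizer (H : Set G)).mul_mem hbN hbN⟩ := by
        ext; simp [pow_two]
      rw [this, Subgroup.mem_subgroupOf]
      exact hb2
    · intro h
      rw [QuotientGroup.eq_one_iff, Subgroup.mem_subgroupOf] at h
      exact hbH h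
  · rintro ⟨x, hx⟩
    obtain ⟨n, rfl⟩ := QuotientGroup.mk_surjective x
    have hnH : (n : G) ∉ H := by
      intro h
      have h1 : (QuotientGroup.mk n : Subgroup.normalizer (H : Set G) ⧸ H.subgroupOf (Subgroup.normalizer (H : Set G))) = 1 :=
        (QuotientGroup.eq_one_iff n).mpr (Subgroup.mem_subgroupOf.mpr h)
      rw [h1, orderOf_one] at hx
      omega
    have hn2 : (n : G) * (n : G) ∈ H := by
      have h1 : (QuotientGroup.mk n : Subgroup.normalizer (H : Set G) ⧸ H.subgroupOf (Subgroup.normalizer (H : Set G))) ^ 2 = 1 := by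
        rw [← hx]; exact pow_orderOf_eq_one _
      rw [pow_two, ← QuotientGroup.mk_mul, QuotientGroup.eq_one_iff,
        Subgroup.mem_subgroupOf] at h1
      simpa using h1
    set g : G := (n : G) with hgdef
    have hgN : g ∈ (Subgroup.normalizer (H : Set G)) := n.2
    set w : Ω := g • v with hwdef
    have hwv : w ≠ v := by
      intro h
      have hgS : g ∈ S := by
        show g • v = v
        rw [← hwdef, h]
      exact hnH (Stmt3Aux.liftSelf hHle hselfH hgN hgS)
    have hHw : H ≤ MulAction.stabilizer G w := by
      intro h hh
      have h2 : g⁻¹ * h * g ∈ H := by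
        have h3 := ((Subgroup.mem_normalizer_iff.mp ((Subgroup.normalizer (H : Set G)).inv_mem hgN)) h).mp hh
        simpa using h3
      have h3 : (g⁻¹ * h * g) • v = v := hHle h2
      show h • w = w
      rw [hwdef]
      calc h • g • v = g • (g⁻¹ * h * g) • v := by
            rw [smul_smul, smul_smul, ← mul_assoc, ← mul_assoc, mul_inv_cancel, one_mul]
      _ = g • v := by rw [h3]
    have hprop := Stmt3Aux.stab_proper htrans hprim hnonreg v w hwv
    set K : Subgroup G := MulAction.stabilizer G v ⊓ MulAction.stabilizer G w with hKdef
    have hKne : K.subgroupOf S ≠ ⊤ := by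
      intro htop
      exact hprop (le_trans (Subgroup.subgroupOf_eq_top.mp htop) inf_le_right)
    have hHK : H.subgroupOf S ≤ K.subgroupOf S := by
      intro t ht
      rw [Subgroup.mem_subgroupOf] at ht ⊢
      exact ⟨hHle ht, hHw ht⟩
    have hKeq : K.subgroupOf S = H.subgroupOf S := by
      rcases eq_or_lt_of_le hHK with h | h
      · exact h.symm
      · exact absurd ((hmax (H.subgroupOf S) hHidx).2 _ h) hKne
    have hKsub : MulAction.stabilizer S w = K.subgroupOf S := by
      ext s
      simp only [Subgroup.mem_subgroupOf, hKdef, Subgroup.mem_inf,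
        MulAction.mem_stabilizer_iff, Subgroup.smul_def]
      have : (s : G) ∈ S := s.2
      exact ⟨fun h => ⟨this, h⟩, fun h => h.2⟩
    have horbcard : (MulAction.orbit S w).ncard = d := by
      rw [← MulAction.index_stabilizer, hKsub, hKeq]
      exact hHidx
    have hg2v : g • w = v := by
      rw [hwdef, smul_smul]
      exact hHle hn2
    refine ⟨MulAction.orbit G ((v, w) : Ω × Ω), ?_, ?_, ⟨?_, ?_⟩, ?_⟩
    · rintro x y ⟨k, hk⟩
      have hk1 : k • v = x := congrArg Prod.fst hk
      have hk2 : k • w = y := congrArg Prod.snd hk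
      refine ⟨k * g, ?_⟩
      show ((k * g) • v, (k * g) • w) = (y, x)
      rw [mul_smul, mul_smul, ← hwdef, hg2v, hk1, hk2]
    · rintro x ⟨k, hk⟩
      have hk1 : k • v = x := congrArg Prod.fst hk
      have hk2 : k • w = x := congrArg Prod.snd hk
      exact hwv (smul_left_cancel k (hk2.trans hk1.symm))
    · rintro c p ⟨k, hk⟩
      refine ⟨c * k, ?_⟩
      show ((c * k) • v, (c * k) • w) = (c • p.1, c • p.2)
      have hk1 : k • v = p.1 := congrArg Prod.fst hk
      have hk2 : k • w = p.2 := congrArg Prod.snd hk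
      rw [mul_smul, mul_smul, hk1, hk2]
    · rintro p ⟨k, hk⟩ q ⟨k', hk'⟩
      have hk1 : k • v = p.1 := congrArg Prod.fst hk
      have hk2 : k • w = p.2 := congrArg Prod.snd hk
      have hk1' : k' • v = q.1 := congrArg Prod.fst hk'
      have hk2' : k' • w = q.2 := congrArg Prod.snd hk'
      refine ⟨k' * k⁻¹, ?_, ?_⟩
      · rw [← hk1, ← hk1', mul_smul, inv_smul_smul]
      · rw [← hk2, ← hk2', mul_smul, inv_smul_smul]
    · intro x
      obtain ⟨c, hc⟩ := htrans.exists_smul_eq v x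
      have himg : {y : Ω | (x, y) ∈ MulAction.orbit G ((v, w) : Ω × Ω)}
          = (fun z => c • z) '' (MulAction.orbit S w) := by
        ext y
        constructor
        · rintro ⟨k, hk⟩
          have hk1 : k • v = x := congrArg Prod.fst hk
          have hk2 : k • w = y := congrArg Prod.snd hk
          have hsS : c⁻¹ * k ∈ S := by
            show (c⁻¹ * k) • v = v
            rw [mul_smul, hk1, ← hc, inv_smul_smul]
          refine ⟨(c⁻¹ * k) • w, ⟨⟨c⁻¹ * k, hsS⟩, rfl⟩, ?_⟩
          show c • ((c⁻¹ * k) • w) = y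
          rw [smul_smul, ← mul_assoc, mul_inv_cancel, one_mul, hk2]
        · rintro ⟨z, ⟨s, rfl⟩, rfl⟩
          refine ⟨c * (s : G), ?_⟩
          show ((c * (s : G)) • v, (c * (s : G)) • w) = (x, c • (s • w))
          have hs : (s : G) • v = v := s.2
          rw [mul_smul, hs, hc, mul_smul]
          rfl
      rw [himg, Set.ncard_image_of_injective _ (MulAction.injective c), horbcard]

theorem stmt_3 (G Ω : Type*) [Group G] [MulAction G Ω] [Finite Ω] [FaithfulSMul G Ω]
    -- G acts primitively (transitively with maximal point stabilizers) ...
    (htrans : MulAction.IsPretransitive G Ω)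
    (hprim : ∀ ω : Ω, IsCoatom (MulAction.stabilizer G ω))
    -- ... and non-regularly
    (hnonreg : ∃ ω : Ω, MulAction.stabilizer G ω ≠ ⊥)
    (v : Ω) (d : ℕ) (hd : 2 ≤ d)
    -- G_v has a unique conjugacy class of subgroups of index d ...
    (hconj : ∀ K L : Subgroup (MulAction.stabilizer G v), K.index = d → L.index = d →
      ∃ g : (MulAction.stabilizer G v), Subgroup.map (MulAut.conj g).toMonoidHom K = L)
    -- ... and these subgroups are maximal and self-normalising in G_v
    (hmax : ∀ K : Subgroup (MulAction.stabilizer G v), K.index = d → IsCoatom K)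
    (hself : ∀ K : Subgroup (MulAction.stabilizer G v), K.index = d → Subgroup.normalizer (K : Set (MulAction.stabilizer G v)) = K)
    -- H is such a subgroup of index d in G_v
    (H : Subgroup G) (hHle : H ≤ MulAction.stabilizer G v)
    (hHidx : (H.subgroupOf (MulAction.stabilizer G v)).index = d) :
    -- there is a G-arc-transitive graph (symmetric irreflexive relation) of valency d
    -- iff N/H contains an element of order 2, where N = N_G(H)
    (∃ A : Set (Ω × Ω), (∀ x y : Ω, (x, y) ∈ A → (y, x) ∈ A) ∧ (∀ x : Ω, (x, x) ∉ A) ∧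
        IsGArcTransitiveDigraph G A ∧ HasOutValency A d) ↔
      (∃ x : Subgroup.normalizer (H : Set G) ⧸ H.subgroupOf (Subgroup.normalizer (H : Set G)), orderOf x = 2) := by
  exact stmt_3_aux G Ω htrans hprim hnonreg v d hd hconj hmax hself H hHle hHidx
end

section
/- Let G, Ω, v, d, H and N be as in the standing hypotheses. Then the point stabilizer G_v has an orbit on Ω of length d if and only if N > H (i.e. the normaliser of H in G strictly contains H). -/
section Aux

variable {G Ω : Type*} [Group G] [MulAction G Ω] [FaithfulSMul G Ω]

/-- In a faithful, transitive, non-regular action with maximal stabilizers,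
no point other than `v` is fixed by all of the stabilizer of `v`. -/
lemma aux_fix (htrans : MulAction.IsPretransitive G Ω)
    (hprim : ∀ ω : Ω, IsCoatom (MulAction.stabilizer G ω))
    (hnonreg : ∃ ω : Ω, MulAction.stabilizer G ω ≠ ⊥)
    (v w : Ω) (hle : MulAction.stabilizer G v ≤ MulAction.stabilizer G w) : w = v := by
  by_contra hne
  have hKbot : MulAction.stabilizer G v ≠ ⊥ := by
    obtain ⟨ω, hω⟩ := hnonreg
    intro hbot
    apply hω
    rw [eq_bot_iff]
    intro x hx
    obtain ⟨g, hg⟩ := htrans.exists_smul_eq ω v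
    have hgx : g * x * g⁻¹ ∈ MulAction.stabilizer G v := by
      rw [MulAction.mem_stabilizer_iff] at hx ⊢
      rw [← hg, mul_smul, mul_smul, inv_smul_smul, hx]
    rw [hbot, Subgroup.mem_bot] at hgx
    have hx1 : x = 1 := by
      have := congrArg (fun y => g⁻¹ * y * g) hgx
      simpa [mul_assoc] using this
    simp [hx1]
  have heq : MulAction.stabilizer G w = MulAction.stabilizer G v := by
    rcases hle.lt_or_eq with h | h
    · exact absurd ((hprim v).2 _ h) (hprim w).1
    · exact h.symm
  obtain ⟨g, hg⟩ := htrans.exists_smul_eq v w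
  have hgK : g ∉ MulAction.stabilizer G v := by
    intro h
    exact hne (by rw [← hg]; exact h)
  have hgnorm : g ∈ Subgroup.normalizer (MulAction.stabilizer G v : Set G) := by
    rw [Subgroup.mem_normalizer_iff]
    intro h
    constructor
    · intro hh
      rw [← heq, MulAction.mem_stabilizer_iff, ← hg, mul_smul, mul_smul, inv_smul_smul,
        MulAction.mem_stabilizer_iff.mp hh]
    · intro hh
      rw [← heq, MulAction.mem_stabilizer_iff, ← hg, mul_smul, mul_smul, inv_smul_smul] at hh
      exact MulAction.mem_stabilizer_iff.mpr (MulAction.injective g hh)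
  have hnt : Subgroup.normalizer (MulAction.stabilizer G v : Set G) = ⊤ := by
    rcases (Subgroup.le_normalizer (H := MulAction.stabilizer G v)).lt_or_eq with h | h
    · exact (hprim v).2 _ h
    · exact absurd (h ▸ hgnorm) hgK
  have hnormal : (MulAction.stabilizer G v).Normal := Subgroup.normalizer_eq_top_iff.mp hnt
  apply hKbot
  rw [eq_bot_iff]
  intro k hk
  rw [Subgroup.mem_bot]
  apply FaithfulSMul.eq_of_smul_eq_smul (α := Ω) (m₂ := (1 : G))
  intro u
  obtain ⟨t, ht⟩ := htrans.exists_smul_eq v u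
  have hmem : t⁻¹ * k * t ∈ MulAction.stabilizer G v := by
    simpa using hnormal.conj_mem k hk t⁻¹
  have h2 : (t⁻¹ * k * t) • v = v := hmem
  have h3 := congrArg (t • ·) h2
  simp only [mul_smul] at h3
  rw [smul_inv_smul] at h3
  rw [← ht]
  simpa using h3

/-- Transfer a conjugation relation inside a subgroup `K` to the ambient group. -/
lemma aux_conj {K A B : Subgroup G} (hA : A ≤ K) (hB : B ≤ K) (a : K)
    (h : Subgroup.map (MulAut.conj a).toMonoidHom (A.subgroupOf K) = B.subgroupOf K) :
    Subgroup.map (MulAut.conj (a : G)).toMonoidHom A = B := by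
  have h2 := congrArg (Subgroup.map K.subtype) h
  rw [Subgroup.map_map] at h2
  have hcomm : K.subtype.comp (MulAut.conj a).toMonoidHom
      = ((MulAut.conj (a : G)).toMonoidHom).comp K.subtype := by
    ext x
    simp [MulAut.conj]
  rw [hcomm, ← Subgroup.map_map, Subgroup.subgroupOf_map_subtype,
    Subgroup.subgroupOf_map_subtype, inf_eq_left.mpr hA, inf_eq_left.mpr hB] at h2
  exact h2

end Aux

theorem stmt_4 (G Ω : Type*) [Group G] [MulAction G Ω] [Finite Ω] [FaithfulSMul G Ω]
    -- G acts primitively (transitively with maximal point stabilizers) ...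
    (htrans : MulAction.IsPretransitive G Ω)
    (hprim : ∀ ω : Ω, IsCoatom (MulAction.stabilizer G ω))
    -- ... and non-regularly
    (hnonreg : ∃ ω : Ω, MulAction.stabilizer G ω ≠ ⊥)
    (v : Ω) (d : ℕ) (hd : 2 ≤ d)
    -- G_v has a unique conjugacy class of subgroups of index d ...
    (hconj : ∀ K L : Subgroup (MulAction.stabilizer G v), K.index = d → L.index = d →
      ∃ g : (MulAction.stabilizer G v), Subgroup.map (MulAut.conj g).toMonoidHom K = L)
    -- ... and these subgroups are maximal and self-normalising in G_v
    (hmax : ∀ K : Subgroup (MulAction.stabilizer G v), K.index = d → IsCoatom K)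
    (hself : ∀ K : Subgroup (MulAction.stabilizer G v), K.index = d → Subgroup.normalizer (K : Set (MulAction.stabilizer G v)) = K)
    -- H is such a subgroup of index d in G_v
    (H : Subgroup G) (hHle : H ≤ MulAction.stabilizer G v)
    (hHidx : (H.subgroupOf (MulAction.stabilizer G v)).index = d) :
    -- G_v has an orbit of length d iff N_G(H) strictly contains H
    (∃ w : Ω, (MulAction.orbit (MulAction.stabilizer G v) w).ncard = d) ↔
      H < Subgroup.normalizer (H : Set G) := by
  have hGfin : Finite G := Finite.of_injective _ (MulAction.toPerm_injective (α := G) (β := Ω))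
  set K := MulAction.stabilizer G v with hKdef
  constructor
  · -- orbit of length d ⟹ N_G(H) > H
    rintro ⟨w, hw⟩
    have hLidx : (MulAction.stabilizer K w).index = d := by
      rw [MulAction.index_stabilizer]; exact hw
    obtain ⟨g, hg⟩ := hconj (MulAction.stabilizer K w) (H.subgroupOf K) hLidx hHidx
    set w' := g • w with hw'def
    have hstabw' : MulAction.stabilizer K w' = H.subgroupOf K := by
      rw [hw'def, MulAction.stabilizer_smul_eq_stabilizer_map_conj, hg]
    have hHw' : ∀ h : G, h ∈ H → h • w' = w' := by
      intro h hh
      have hmem : (⟨h, hHle hh⟩ : K) ∈ MulAction.stabilizer K w' := by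
        rw [hstabw']; exact hh
      exact hmem
    have hw'v : w' ≠ v := by
      intro hcontra
      have htop : H.subgroupOf K = ⊤ := by
        rw [← hstabw', hcontra, eq_top_iff]
        intro x _
        exact x.2
      rw [htop, Subgroup.index_top] at hHidx
      omega
    obtain ⟨g0, hg0⟩ := htrans.exists_smul_eq v w'
    set H' := Subgroup.map (MulAut.conj g0⁻¹).toMonoidHom H with hH'def
    have hmemH' : ∀ y : G, y ∈ H' ↔ g0 * y * g0⁻¹ ∈ H := by
      intro y
      rw [hH'def, Subgroup.mem_map_equiv, MulAut.conj_symm_apply, inv_inv]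
    have hH'le : H' ≤ K := by
      intro y hy
      rw [hmemH'] at hy
      have h1 : (g0 * y * g0⁻¹) • w' = w' := hHw' _ hy
      rw [mul_smul, mul_smul] at h1
      have hv : g0⁻¹ • w' = v := by rw [← hg0, inv_smul_smul]
      have h2 : y • (g0⁻¹ • w') = g0⁻¹ • w' := by
        calc y • (g0⁻¹ • w') = g0⁻¹ • (g0 • (y • (g0⁻¹ • w'))) := (inv_smul_smul _ _).symm
          _ = g0⁻¹ • w' := by rw [h1]
      rw [hv] at h2
      exact h2
    have hcard : Nat.card H' = Nat.card H := by
      refine Nat.card_congr ((Subgroup.equivMapOfInjective H _ ?_).toEquiv).symm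
      exact (MulAut.conj g0⁻¹).injective
    have hidx' : (H'.subgroupOf K).index = d := by
      have e1 := Subgroup.index_mul_card (H'.subgroupOf K)
      have e2 := Subgroup.index_mul_card (H.subgroupOf K)
      have c1 : Nat.card (H'.subgroupOf K) = Nat.card H' :=
        Nat.card_congr (Subgroup.subgroupOfEquivOfLe hH'le).toEquiv
      have c2 : Nat.card (H.subgroupOf K) = Nat.card H :=
        Nat.card_congr (Subgroup.subgroupOfEquivOfLe hHle).toEquiv
      have hpos : 0 < Nat.card H := Nat.card_pos
      rw [c1, hcard] at e1
      rw [c2, hHidx] at e2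
      exact Nat.eq_of_mul_eq_mul_right hpos (e1.trans e2.symm)
    obtain ⟨a, ha⟩ := hconj (H'.subgroupOf K) (H.subgroupOf K) hidx' hHidx
    have hmapa : Subgroup.map (MulAut.conj (a : G)).toMonoidHom H' = H :=
      aux_conj hH'le hHle a ha
    have hmemH : ∀ z : G, z ∈ H ↔ (a : G)⁻¹ * z * (a : G) ∈ H' := by
      intro z
      rw [← hmapa, Subgroup.mem_map_equiv, MulAut.conj_symm_apply]
    rw [SetLike.lt_iff_le_and_exists]
    refine ⟨Subgroup.le_normalizer, (a : G) * g0⁻¹, ?_, ?_⟩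
    · rw [Subgroup.mem_normalizer_iff]
      intro h
      rw [hmemH (((a : G) * g0⁻¹) * h * ((a : G) * g0⁻¹)⁻¹)]
      have e3 : (a : G)⁻¹ * (((a : G) * g0⁻¹) * h * ((a : G) * g0⁻¹)⁻¹) * (a : G)
          = g0⁻¹ * h * g0 := by group
      rw [e3, hmemH' (g0⁻¹ * h * g0)]
      have e4 : g0 * (g0⁻¹ * h * g0) * g0⁻¹ = h := by group
      rw [e4]
    · intro hx
      have h1 : ((a : G) * g0⁻¹)⁻¹ • v = v := hHle (H.inv_mem hx)
      rw [mul_inv_rev, inv_inv, mul_smul] at h1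
      have hav : (a : G)⁻¹ • v = v := K.inv_mem a.2
      rw [hav, hg0] at h1
      exact hw'v h1
  · -- N_G(H) > H ⟹ orbit of length d
    intro hlt
    obtain ⟨x, hxN, hxH⟩ := SetLike.exists_of_lt hlt
    have hxK : x ∉ K := by
      intro hxK
      apply hxH
      have hmem : (⟨x, hxK⟩ : K) ∈ Subgroup.normalizer (H.subgroupOf K : Set K) := by
        rw [Subgroup.mem_normalizer_iff]
        intro h
        simp only [Subgroup.mem_subgroupOf, Subgroup.coe_mul, InvMemClass.coe_inv]
        exact Subgroup.mem_normalizer_iff.mp hxN h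
      rw [hself _ hHidx] at hmem
      exact hmem
    set w := x • v with hwdef
    have hwv : w ≠ v := fun h => hxK h
    have hHw : H ≤ MulAction.stabilizer G w := by
      intro h hh
      have hxinv : x⁻¹ ∈ Subgroup.normalizer (H : Set G) := (Subgroup.normalizer (H : Set G)).inv_mem hxN
      have h1 : x⁻¹ * h * x ∈ H := by
        have := (Subgroup.mem_normalizer_iff.mp hxinv h).mp hh
        simpa using this
      have h2 : (x⁻¹ * h * x) • v = v := hHle h1
      rw [mul_smul, mul_smul] at h2
      have h3 := congrArg (x • ·) h2
      rw [smul_inv_smul] at h3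
      show h • w = w
      rw [hwdef]
      exact h3
    have hsub : H.subgroupOf K ≤ (MulAction.stabilizer G w).subgroupOf K := by
      intro y hy
      rw [Subgroup.mem_subgroupOf] at hy ⊢
      exact hHw hy
    rcases hsub.lt_or_eq with hl | he
    · exfalso
      have htop : (MulAction.stabilizer G w).subgroupOf K = ⊤ := (hmax _ hHidx).2 _ hl
      have hKle : K ≤ MulAction.stabilizer G w := by
        intro k hk
        have : (⟨k, hk⟩ : K) ∈ (MulAction.stabilizer G w).subgroupOf K := by
          rw [htop]; trivial
        exact this
      exact hwv (aux_fix htrans hprim hnonreg v w hKle)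
    · refine ⟨w, ?_⟩
      rw [← MulAction.index_stabilizer]
      have hstab : MulAction.stabilizer K w = (MulAction.stabilizer G w).subgroupOf K := by
        ext; rfl
      rw [hstab, ← he]
      exact hHidx
end

section
/- Let q be an odd prime power and let X be a subgroup of PGL(2,q) isomorphic to the symmetric group Sym(4). Then X is self-normalising in PGL(2,q) (i.e. N_{PGL(2,q)}(X) = X), and if Y is a subgroup of X of index 2 (so Y ≅ Alt(4)), then the normaliser of Y in PGL(2,q) equals X. -/
/-- The projective general linear group PGL(2,F): the quotient of GL(2,F) by its center. -/
abbrev PGL2 (F : Type*) [Field F] :=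
  Matrix.GeneralLinearGroup (Fin 2) F ⧸ Subgroup.center (Matrix.GeneralLinearGroup (Fin 2) F)

section MatrixCore

set_option linter.unnecessarySeqFocus false

variable {F : Type*} [Field F]

abbrev M2 (F : Type*) [Field F] := Matrix (Fin 2) (Fin 2) F


lemma commutant {A G : M2 F} (hA : ∀ c : F, A ≠ c • 1) (h : G * A = A * G) :
    ∃ x y : F, G = x • (1 : M2 F) + y • A := by
  have e00 := congrFun (congrFun h 0) 0
  have e01 := congrFun (congrFun h 0) 1
  have e10 := congrFun (congrFun h 1) 0
  simp [Matrix.mul_apply, Fin.sum_univ_two] at e00 e01 e10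
  by_cases h01 : A 0 1 = 0
  · by_cases h10 : A 1 0 = 0
    · have hd : A 0 0 ≠ A 1 1 := by
        intro hd
        apply hA (A 0 0)
        ext i j
        fin_cases i <;> fin_cases j <;>
          simp [Matrix.one_apply, h01, h10, hd.symm]
      have hd' : A 0 0 - A 1 1 ≠ 0 := sub_ne_zero.2 hd
      have hG01 : G 0 1 = 0 := by
        have : G 0 1 * (A 1 1 - A 0 0) = 0 := by
          linear_combination e01 + (G 1 1 - G 0 0) * h01
        rcases mul_eq_zero.1 this with h | h
        · exact h
        · exact absurd (sub_eq_zero.1 h).symm hd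
      have hG10 : G 1 0 = 0 := by
        have : G 1 0 * (A 0 0 - A 1 1) = 0 := by
          linear_combination e10 + (G 0 0 - G 1 1) * h10
        rcases mul_eq_zero.1 this with h | h
        · exact h
        · exact absurd (sub_eq_zero.1 h) hd
      refine ⟨G 0 0 - ((G 0 0 - G 1 1)/(A 0 0 - A 1 1)) * A 0 0,
              (G 0 0 - G 1 1)/(A 0 0 - A 1 1), ?_⟩
      ext i j
      fin_cases i <;> fin_cases j <;>
        simp [Matrix.one_apply, h01, h10, hG01, hG10] <;> field_simp <;> ring
    · refine ⟨G 0 0 - (G 1 0 / A 1 0) * A 0 0, G 1 0 / A 1 0, ?_⟩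
      have hG01 : G 0 1 = 0 := by
        have : G 0 1 * A 1 0 = 0 := by linear_combination e00 + G 1 0 * h01
        rcases mul_eq_zero.1 this with h | h
        · exact h
        · exact absurd h h10
      ext i j
      fin_cases i <;> fin_cases j <;>
        simp [Matrix.one_apply, h01, hG01] <;> field_simp
      linear_combination e10
  · refine ⟨G 0 0 - (G 0 1 / A 0 1) * A 0 0, G 0 1 / A 0 1, ?_⟩
    ext i j
    fin_cases i <;> fin_cases j <;> simp [Matrix.one_apply] <;> field_simp
    · linear_combination -e00
    · linear_combination -e01


lemma mem_center_iff' {u : GL (Fin 2) F} :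
    u ∈ Subgroup.center (GL (Fin 2) F) ↔ ∃ c : F, (u : M2 F) = c • (1 : M2 F) := by
  constructor
  · intro hu
    set t1 : GL (Fin 2) F :=
      ⟨!![1,1;0,1], !![1,-1;0,1], by simp [Matrix.mul_fin_two, Matrix.one_fin_two],
        by simp [Matrix.mul_fin_two, Matrix.one_fin_two]⟩ with ht1
    set t2 : GL (Fin 2) F :=
      ⟨!![1,0;1,1], !![1,0;-1,1], by simp [Matrix.mul_fin_two, Matrix.one_fin_two],
        by simp [Matrix.mul_fin_two, Matrix.one_fin_two]⟩ with ht2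
    have h1 : (t1 : M2 F) * (u : M2 F) = (u : M2 F) * (t1 : M2 F) := by
      rw [← Units.val_mul, ← Units.val_mul, Subgroup.mem_center_iff.1 hu t1]
    have h2 : (t2 : M2 F) * (u : M2 F) = (u : M2 F) * (t2 : M2 F) := by
      rw [← Units.val_mul, ← Units.val_mul, Subgroup.mem_center_iff.1 hu t2]
    have e1 := congrFun (congrFun h1 0) 0
    have e2 := congrFun (congrFun h1 0) 1
    have e3 := congrFun (congrFun h2 0) 0
    simp [ht1, ht2, Matrix.mul_apply, Fin.sum_univ_two] at e1 e2 e3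
    refine ⟨(u : M2 F) 0 0, ?_⟩
    ext i j
    fin_cases i <;> fin_cases j <;> simp [Matrix.one_apply]
    · exact e3
    · exact e1
    · linear_combination e2
  · rintro ⟨c, hc⟩
    rw [Subgroup.mem_center_iff]
    intro g
    ext : 1
    rw [Units.val_mul, Units.val_mul, hc, smul_mul_assoc, mul_smul_comm, one_mul, mul_one]


lemma mk_eq_mk_of_scalar {u v : GL (Fin 2) F} {c : F} (h : (u : M2 F) = c • (v : M2 F)) :
    (QuotientGroup.mk u : PGL2 F) = QuotientGroup.mk v := by
  have hc0 : c ≠ 0 := by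
    rintro rfl
    have : IsUnit (u : M2 F) := u.isUnit
    rw [h, zero_smul] at this
    exact zero_ne_one (isUnit_zero_iff.1 this)
  refine (QuotientGroup.eq).2 (mem_center_iff'.2 ⟨c⁻¹, ?_⟩)
  have hv : (v : M2 F) = c⁻¹ • (u : M2 F) := by
    rw [h, smul_smul, inv_mul_cancel₀ hc0, one_smul]
  calc ((u⁻¹ * v : GL (Fin 2) F) : M2 F) = ((u⁻¹ : GL (Fin 2) F) : M2 F) * (v : M2 F) :=
        Units.val_mul _ _
    _ = c⁻¹ • (((u⁻¹ : GL (Fin 2) F) : M2 F) * (u : M2 F)) := by rw [hv, mul_smul_comm]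
    _ = c⁻¹ • (1 : M2 F) := by rw [← Units.val_mul, inv_mul_cancel, Units.val_one]

lemma scalar_of_mk_eq {u v : GL (Fin 2) F}
    (h : (QuotientGroup.mk u : PGL2 F) = QuotientGroup.mk v) :
    ∃ c : F, (v : M2 F) = c • (u : M2 F) := by
  obtain ⟨c, hc⟩ := mem_center_iff'.1 ((QuotientGroup.eq).1 h)
  refine ⟨c, ?_⟩
  have hv : ((v : GL (Fin 2) F) : M2 F) = ((u * (u⁻¹ * v) : GL (Fin 2) F) : M2 F) := by
    rw [mul_inv_cancel_left]
  rw [hv, Units.val_mul, hc, mul_smul_comm, mul_one]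

lemma comm_scalar {A G : GL (Fin 2) F}
    (h : (QuotientGroup.mk G : PGL2 F) * QuotientGroup.mk A
        = QuotientGroup.mk A * QuotientGroup.mk G) :
    ∃ c : F, (c = 1 ∨ c = -1) ∧ (A : M2 F) * (G : M2 F) = c • ((G : M2 F) * (A : M2 F)) := by
  rw [← QuotientGroup.mk_mul, ← QuotientGroup.mk_mul] at h
  obtain ⟨c, hc⟩ := scalar_of_mk_eq h
  rw [Units.val_mul, Units.val_mul] at hc
  refine ⟨c, ?_, hc⟩
  have hdet := congrArg Matrix.det hc
  rw [Matrix.det_smul, Matrix.det_mul, Matrix.det_mul, Fintype.card_fin] at hdet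
  have hA0 : (A : M2 F).det ≠ 0 := by
    simpa [isUnit_iff_ne_zero] using (Matrix.isUnit_iff_isUnit_det _).1 A.isUnit
  have hG0 : (G : M2 F).det ≠ 0 := by
    simpa [isUnit_iff_ne_zero] using (Matrix.isUnit_iff_isUnit_det _).1 G.isUnit
  have : c ^ 2 = 1 := by
    have h1 : c ^ 2 * ((G : M2 F).det * (A : M2 F).det)
        = 1 * ((G : M2 F).det * (A : M2 F).det) := by linear_combination -hdet
    exact mul_right_cancel₀ (mul_ne_zero hG0 hA0) h1
  rw [← mul_self_eq_one_iff]
  linear_combination this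

lemma gl_ne_zero (u : GL (Fin 2) F) : (u : M2 F) ≠ 0 := by
  intro h
  have : IsUnit (u : M2 F) := u.isUnit
  rw [h] at this
  exact zero_ne_one (isUnit_zero_iff.1 this)

lemma sq_scalar {A : GL (Fin 2) F}
    (h : (QuotientGroup.mk A : PGL2 F) * QuotientGroup.mk A = 1) :
    ∃ α : F, (A : M2 F) * (A : M2 F) = α • (1 : M2 F) := by
  rw [← QuotientGroup.mk_mul, QuotientGroup.eq_one_iff] at h
  obtain ⟨α, hα⟩ := mem_center_iff'.1 h
  exact ⟨α, by rw [← Units.val_mul]; exact hα⟩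

lemma nonscalar_of_ne_one {A : GL (Fin 2) F} (h : (QuotientGroup.mk A : PGL2 F) ≠ 1) :
    ∀ c : F, (A : M2 F) ≠ c • 1 := by
  intro c hc
  exact h ((QuotientGroup.eq_one_iff A).2 (mem_center_iff'.2 ⟨c, hc⟩))

lemma klein_centralizer (h2 : (2 : F) ≠ 0) {a b g : PGL2 F}
    (ha : a * a = 1) (hb : b * b = 1) (hab : a * b = b * a)
    (ha1 : a ≠ 1) (hb1 : b ≠ 1) (hba : b ≠ a)
    (hga : g * a = a * g) (hgb : g * b = b * g) :
    g = 1 ∨ g = a ∨ g = b ∨ g = a * b := by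
  have habsq : (a * b) * (a * b) = 1 := by
    rw [mul_assoc a b (a * b), ← mul_assoc b a b, ← hab, mul_assoc a b b, hb, mul_one, ha]
  obtain ⟨A, rfl⟩ := QuotientGroup.mk_surjective a
  obtain ⟨B, rfl⟩ := QuotientGroup.mk_surjective b
  obtain ⟨G, rfl⟩ := QuotientGroup.mk_surjective g
  have hMsc := nonscalar_of_ne_one ha1
  have hNsc := nonscalar_of_ne_one hb1
  obtain ⟨α, hM2⟩ := sq_scalar ha
  obtain ⟨β, hN2⟩ := sq_scalar hb
  set M := ((A : GL (Fin 2) F) : M2 F) with hM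
  set N := ((B : GL (Fin 2) F) : M2 F) with hN
  set P := ((G : GL (Fin 2) F) : M2 F) with hP
  -- anticommutation of M and N
  obtain ⟨ε, hε1, hεeq⟩ := comm_scalar hab
  rw [← hM, ← hN] at hεeq
  have hNM : N * M = -(M * N) := by
    rcases hε1 with rfl | rfl
    · -- ε = 1 : contradiction
      exfalso
      rw [one_smul] at hεeq
      obtain ⟨x, y, hxy⟩ := commutant hMsc hεeq
      have h0 : (x • (1 : M2 F) + y • M) * (x • (1 : M2 F) + y • M) = β • 1 := by
        rw [← hxy]; exact hN2
      have key : (2 * (x * y)) • M = (β - x * x - y * y * α) • (1 : M2 F) := by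
        simp only [mul_add, add_mul, smul_mul_assoc, mul_smul_comm, smul_smul,
          one_mul, mul_one] at h0
        rw [hM2, smul_smul] at h0
        linear_combination (norm := module) h0
      by_cases hxy0 : 2 * (x * y) = 0
      · have : x * y = 0 := by
          rcases mul_eq_zero.1 hxy0 with h | h
          · exact absurd h h2
          · exact h
        rcases mul_eq_zero.1 this with rfl | rfl
        · -- x = 0 : N = y • M, so b = a
          exact hba (mk_eq_mk_of_scalar (by show N = y • M; rw [hxy, zero_smul, zero_add]))
        · -- y = 0 : N scalar
          exact hNsc x (by rw [hxy, zero_smul, add_zero])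
      · exact hMsc ((2 * (x * y))⁻¹ * (β - x * x - y * y * α)) (by
          rw [← one_smul F M, ← inv_mul_cancel₀ hxy0, mul_smul, key, smul_smul])
    · rw [neg_smul, one_smul] at hεeq; exact hεeq
  obtain ⟨c, hc1, hcEq⟩ := comm_scalar hga
  rw [← hM, ← hP] at hcEq
  obtain ⟨d, hd1, hdEq⟩ := comm_scalar hgb
  rw [← hN, ← hP] at hdEq
  have hMN0 : M * N ≠ 0 := by
    rw [hM, hN, ← Units.val_mul]; exact gl_ne_zero _
  have hM0 : M ≠ 0 := gl_ne_zero _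
  have hN0 : N ≠ 0 := gl_ne_zero _
  rcases hc1 with rfl | rfl
  · rw [one_smul] at hcEq
    obtain ⟨x, y, hxy⟩ := commutant hMsc hcEq.symm
    rcases hd1 with rfl | rfl
    · -- g commutes with both lifts: g = 1
      rw [one_smul] at hdEq
      have h0 : N * (x • (1 : M2 F) + y • M) = (x • (1 : M2 F) + y • M) * N := by
        rw [← hxy]; exact hdEq
      have key : (2 * y) • (M * N) = 0 := by
        simp only [mul_add, add_mul, smul_mul_assoc, mul_smul_comm, mul_one, one_mul] at h0
        rw [hNM] at h0
        linear_combination (norm := module) -h0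
      have hy : y = 0 := by
        rcases smul_eq_zero.1 key with h | h
        · rcases mul_eq_zero.1 h with h | h
          · exact absurd h h2
          · exact h
        · exact absurd h hMN0
      left
      exact (QuotientGroup.eq_one_iff G).2 (mem_center_iff'.2
        ⟨x, by show P = x • 1; rw [hxy, hy, zero_smul, add_zero]⟩)
    · -- g = a
      rw [neg_smul, one_smul] at hdEq
      have h0 : N * (x • (1 : M2 F) + y • M) = -((x • (1 : M2 F) + y • M) * N) := by
        rw [← hxy]; exact hdEq
      have key : (2 * x) • N = 0 := by
        simp only [mul_add, add_mul, smul_mul_assoc, mul_smul_comm, mul_one, one_mul,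
          neg_add, ← smul_neg] at h0
        rw [hNM] at h0
        linear_combination (norm := module) h0
      have hx : x = 0 := by
        rcases smul_eq_zero.1 key with h | h
        · rcases mul_eq_zero.1 h with h | h
          · exact absurd h h2
          · exact h
        · exact absurd h hN0
      right; left
      exact mk_eq_mk_of_scalar (by show P = y • M; rw [hxy, hx, zero_smul, zero_add])
  · rw [neg_smul, one_smul] at hcEq
    rcases hd1 with rfl | rfl
    · -- g = b
      rw [one_smul] at hdEq
      obtain ⟨x, y, hxy⟩ := commutant hNsc hdEq.symm
      have h0 : M * (x • (1 : M2 F) + y • N) = -((x • (1 : M2 F) + y • N) * M) := by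
        rw [← hxy]; exact hcEq
      have key : (2 * x) • M = 0 := by
        simp only [mul_add, add_mul, smul_mul_assoc, mul_smul_comm, mul_one, one_mul,
          neg_add, ← smul_neg] at h0
        rw [hNM] at h0
        linear_combination (norm := module) h0
      have hx : x = 0 := by
        rcases smul_eq_zero.1 key with h | h
        · rcases mul_eq_zero.1 h with h | h
          · exact absurd h h2
          · exact h
        · exact absurd h hM0
      right; right; left
      exact mk_eq_mk_of_scalar (by show P = y • N; rw [hxy, hx, zero_smul, zero_add])
    · -- g = a * b
      rw [neg_smul, one_smul] at hdEq
      have hQM : (P * (M * N)) * M = M * (P * (M * N)) := by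
        calc (P * (M * N)) * M = P * (M * (N * M)) := by rw [mul_assoc, mul_assoc]
          _ = -(P * (M * (M * N))) := by rw [hNM, mul_neg, mul_neg]
          _ = (M * P) * (M * N) := by rw [hcEq]; noncomm_ring
          _ = M * (P * (M * N)) := by rw [mul_assoc]
      obtain ⟨x, y, hxy⟩ := commutant hMsc hQM
      have hQN : (P * (M * N)) * N = N * (P * (M * N)) := by
        have l1 : (P * (M * N)) * N = β • (P * M) := by
          rw [mul_assoc, mul_assoc, hN2, mul_smul_comm, mul_one, mul_smul_comm]
        have l2 : N * (P * (M * N)) = β • (P * M) := by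
          calc N * (P * (M * N)) = (N * P) * (M * N) := by rw [mul_assoc]
            _ = -((P * N) * (M * N)) := by rw [hdEq, neg_mul]
            _ = -(P * ((N * M) * N)) := by noncomm_ring
            _ = P * ((M * N) * N) := by rw [hNM]; noncomm_ring
            _ = β • (P * M) := by rw [mul_assoc, hN2, mul_smul_comm, mul_one, mul_smul_comm]
        rw [l1, l2]
      have h0 : N * (x • (1 : M2 F) + y • M) = (x • (1 : M2 F) + y • M) * N := by
        rw [← hxy]; exact hQN.symm
      have key : (2 * y) • (M * N) = 0 := by
        simp only [mul_add, add_mul, smul_mul_assoc, mul_smul_comm, mul_one, one_mul] at h0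
        rw [hNM] at h0
        linear_combination (norm := module) -h0
      have hy : y = 0 := by
        rcases smul_eq_zero.1 key with h | h
        · rcases mul_eq_zero.1 h with h | h
          · exact absurd h h2
          · exact h
        · exact absurd h hMN0
      right; right; right
      have hone : (QuotientGroup.mk (G * (A * B)) : PGL2 F) = 1 := by
        refine (QuotientGroup.eq_one_iff _).2 (mem_center_iff'.2 ⟨x, ?_⟩)
        rw [Units.val_mul, Units.val_mul]
        show P * (M * N) = x • 1
        rw [hxy, hy, zero_smul, add_zero]
      rw [QuotientGroup.mk_mul, QuotientGroup.mk_mul] at hone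
      have h1 := eq_inv_of_mul_eq_one_left hone
      have h2' := inv_eq_of_mul_eq_one_right habsq
      rw [h1, h2']


end MatrixCore
section Glue

open Equiv

private def k1 : Equiv.Perm (Fin 4) := Equiv.swap 0 1 * Equiv.swap 2 3
private def k2 : Equiv.Perm (Fin 4) := Equiv.swap 0 2 * Equiv.swap 1 3

private lemma D2 : k1*k1 = 1 ∧ k2*k2 = 1 ∧ k1*k2 = k2*k1 ∧ k1 ≠ 1 ∧ k2 ≠ 1 ∧ k1 ≠ k2
    ∧ k1*k2 ≠ 1 ∧ k1*k2 ≠ k1 ∧ k1*k2 ≠ k2 := by decide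

private lemma D1 : ∀ z : Equiv.Perm (Fin 4), (z*z = 1 ∧ ∃ w : Equiv.Perm (Fin 4), w*w = z) ↔
    (z = 1 ∨ z = k1 ∨ z = k2 ∨ z = k1*k2) := by decide

private lemma D3 : ∀ u v : Equiv.Perm (Fin 4),
    ((u = k1 ∨ u = k2 ∨ u = k1*k2) ∧ (v = k1 ∨ v = k2 ∨ v = k1*k2) ∧ u ≠ v) →
    ∃ σ : Equiv.Perm (Fin 4), σ*k1*σ⁻¹ = u ∧ σ*k2*σ⁻¹ = v := by decide

private lemma D4 : ∃ w : Equiv.Perm (Fin 4), w*w = k1 := by decide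
private lemma D5 : ∃ w : Equiv.Perm (Fin 4), w*w = k2 := by decide
private lemma D6 : (Finset.image (fun w : Equiv.Perm (Fin 4) => w*w) Finset.univ).card = 12 := by
  decide

variable {F : Type*} [Field F]

private lemma two_ne_zero_of_odd_card [Fintype F] (hodd : Odd (Fintype.card F)) : (2 : F) ≠ 0 := by
  intro h
  have h2ord : addOrderOf (1 : F) ∣ 2 := addOrderOf_dvd_iff_nsmul_eq_zero.2 (by
    simpa using h)
  rcases (Nat.dvd_prime Nat.prime_two).1 h2ord with h1 | h1
  · rw [AddMonoid.addOrderOf_eq_one_iff] at h1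
    exact one_ne_zero h1
  · have : (2 : ℕ) ∣ Fintype.card F := h1 ▸ addOrderOf_dvd_card
    rw [Nat.odd_iff] at hodd
    omega

end Glue

theorem stmt_9 (F : Type*) [Field F] [Fintype F] (hodd : Odd (Fintype.card F))
    (X : Subgroup (PGL2 F)) (hX : Nonempty (X ≃* Equiv.Perm (Fin 4))) :
    Subgroup.normalizer (X : Set (PGL2 F)) = X ∧
      ∀ Y : Subgroup (PGL2 F), Y ≤ X → Y.relIndex X = 2 → Subgroup.normalizer (Y : Set (PGL2 F)) = X := by
  obtain ⟨e⟩ := hX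
  set f : Equiv.Perm (Fin 4) →* PGL2 F := X.subtype.comp e.symm.toMonoidHom with hf_def
  have hfinj : Function.Injective f := X.subtype_injective.comp e.symm.injective
  have hfrange : ∀ x : PGL2 F, x ∈ X ↔ ∃ z, f z = x := by
    intro x
    constructor
    · intro hx
      exact ⟨e ⟨x, hx⟩, by simp [hf_def]⟩
    · rintro ⟨z, rfl⟩
      exact (e.symm z).2
  set a := f k1 with ha_def
  set b := f k2 with hb_def
  have hamem : a ∈ X := (hfrange a).2 ⟨k1, rfl⟩
  have hbmem : b ∈ X := (hfrange b).2 ⟨k2, rfl⟩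
  have habmem : a*b ∈ X := (hfrange _).2 ⟨k1*k2, map_mul f k1 k2⟩
  obtain ⟨d1, d2, d3, d4, d5, d6, d7, d8, d9⟩ := D2
  have haa : a*a = 1 := by rw [← map_mul, d1, map_one]
  have hbb : b*b = 1 := by rw [← map_mul, d2, map_one]
  have hab : a*b = b*a := by rw [← map_mul, ← map_mul, d3]
  have hne1 : ∀ {z : Equiv.Perm (Fin 4)}, z ≠ 1 → f z ≠ 1 :=
    fun hz h => hz (hfinj (by rw [h, map_one]))
  have ha1 : a ≠ 1 := hne1 d4
  have hb1 : b ≠ 1 := hne1 d5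
  have hba : b ≠ a := fun h => d6 (hfinj h).symm
  have h2 : (2:F) ≠ 0 := two_ne_zero_of_odd_card hodd
  have hchar : ∀ x : PGL2 F, x ∈ X → x*x = 1 → (∃ w, w ∈ X ∧ w*w = x) →
      (x = a ∨ x = b ∨ x = a*b) ∨ x = 1 := by
    intro x hx hxx hw
    obtain ⟨w, hwX, hww⟩ := hw
    obtain ⟨z, rfl⟩ := (hfrange x).1 hx
    obtain ⟨w', rfl⟩ := (hfrange w).1 hwX
    have hz2 : z*z = 1 := hfinj (by rw [map_mul, hxx, map_one])
    have hw2 : w'*w' = z := hfinj (by rw [map_mul, hww])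
    rcases (D1 z).1 ⟨hz2, w', hw2⟩ with h | h | h | h
    · right; rw [h, map_one]
    · left; left; rw [h]
    · left; right; left; rw [h]
    · left; right; right; rw [h, map_mul]
  have endgame : ∀ g : PGL2 F,
      (g*a*g⁻¹ = a ∨ g*a*g⁻¹ = b ∨ g*a*g⁻¹ = a*b) →
      (g*b*g⁻¹ = a ∨ g*b*g⁻¹ = b ∨ g*b*g⁻¹ = a*b) → g ∈ X := by
    intro g hu hv
    have hcne : g*a*g⁻¹ ≠ g*b*g⁻¹ := by
      intro h
      exact hba (mul_left_cancel (mul_right_cancel h)).symm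
    have huz : ∃ u' : Equiv.Perm (Fin 4), (u' = k1 ∨ u' = k2 ∨ u' = k1*k2) ∧ f u' = g*a*g⁻¹ := by
      rcases hu with h | h | h
      · exact ⟨k1, Or.inl rfl, h.symm⟩
      · exact ⟨k2, Or.inr (Or.inl rfl), h.symm⟩
      · exact ⟨k1*k2, Or.inr (Or.inr rfl), by rw [map_mul]; exact h.symm⟩
    have hvz : ∃ v' : Equiv.Perm (Fin 4), (v' = k1 ∨ v' = k2 ∨ v' = k1*k2) ∧ f v' = g*b*g⁻¹ := by
      rcases hv with h | h | h
      · exact ⟨k1, Or.inl rfl, h.symm⟩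
      · exact ⟨k2, Or.inr (Or.inl rfl), h.symm⟩
      · exact ⟨k1*k2, Or.inr (Or.inr rfl), by rw [map_mul]; exact h.symm⟩
    obtain ⟨u', hu', hfu⟩ := huz
    obtain ⟨v', hv', hfv⟩ := hvz
    have huv : u' ≠ v' := fun h => hcne (by rw [← hfu, ← hfv, h])
    obtain ⟨σ, hσ1, hσ2⟩ := D3 u' v' ⟨hu', hv', huv⟩
    set x := f σ with hx_def
    have hxmem : x ∈ X := (hfrange x).2 ⟨σ, rfl⟩
    have hxa : x*a*x⁻¹ = g*a*g⁻¹ := by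
      rw [← hfu, ← hσ1, map_mul, map_mul, map_inv]
    have hxb : x*b*x⁻¹ = g*b*g⁻¹ := by
      rw [← hfv, ← hσ2, map_mul, map_mul, map_inv]
    have hca : (x⁻¹*g)*a = a*(x⁻¹*g) := by
      have h' : a * (x⁻¹ * g) = x⁻¹ * (x*a*x⁻¹) * g := by group
      rw [hxa] at h'
      rw [h']; group
    have hcb : (x⁻¹*g)*b = b*(x⁻¹*g) := by
      have h' : b * (x⁻¹ * g) = x⁻¹ * (x*b*x⁻¹) * g := by group
      rw [hxb] at h'
      rw [h']; group
    have hmemc : x⁻¹*g ∈ X := by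
      rcases klein_centralizer h2 haa hbb hab ha1 hb1 hba hca hcb with h | h | h | h <;> rw [h]
      · exact X.one_mem
      · exact hamem
      · exact hbmem
      · exact habmem
    have hgx : g = x*(x⁻¹*g) := by group
    rw [hgx]
    exact X.mul_mem hxmem hmemc
  constructor
  · refine le_antisymm ?_ Subgroup.le_normalizer
    intro g hg
    have hn := Subgroup.mem_normalizer_iff.1 hg
    have key : ∀ t : PGL2 F, t ∈ X → t*t = 1 → (∃ w, w ∈ X ∧ w*w = t) → t ≠ 1 →
        (g*t*g⁻¹ = a ∨ g*t*g⁻¹ = b ∨ g*t*g⁻¹ = a*b) := by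
      intro t ht htt hw ht1
      obtain ⟨w, hwX, hww⟩ := hw
      have hsq1 : (g*t*g⁻¹)*(g*t*g⁻¹) = 1 := by
        rw [show (g*t*g⁻¹)*(g*t*g⁻¹) = g*(t*t)*g⁻¹ from by group, htt]
        group
      have hsq2 : (g*w*g⁻¹)*(g*w*g⁻¹) = g*t*g⁻¹ := by
        rw [show (g*w*g⁻¹)*(g*w*g⁻¹) = g*(w*w)*g⁻¹ from by group, hww]
      rcases hchar _ ((hn t).1 ht) hsq1 ⟨g*w*g⁻¹, (hn w).1 hwX, hsq2⟩ with h | h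
      · exact h
      · exact absurd (by rw [show t = g⁻¹*(g*t*g⁻¹)*g from by group, h]; group) ht1
    have hwa : ∃ w, w ∈ X ∧ w*w = a := by
      obtain ⟨w', hw'⟩ := D4
      exact ⟨f w', (hfrange _).2 ⟨w', rfl⟩, by rw [← map_mul, hw']⟩
    have hwb : ∃ w, w ∈ X ∧ w*w = b := by
      obtain ⟨w', hw'⟩ := D5
      exact ⟨f w', (hfrange _).2 ⟨w', rfl⟩, by rw [← map_mul, hw']⟩
    exact endgame g (key a hamem haa hwa ha1) (key b hbmem hbb hwb hb1)
  · intro Y hYX hYrel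
    set Y' := Y.comap f with hY'def
    have hY'index : Y'.index = 2 := by
      have hr : f.range = X := by
        ext x
        rw [MonoidHom.mem_range]
        exact (hfrange x).symm
      rw [hY'def, Subgroup.index_comap, hr]
      exact hYrel
    have hsq : ∀ z : Equiv.Perm (Fin 4), z*z ∈ Y' := by
      intro z
      have := Subgroup.sq_mem_of_index_two hY'index z
      rwa [pow_two] at this
    have hcard24 : Nat.card (Equiv.Perm (Fin 4)) = 24 := by
      rw [Nat.card_eq_fintype_card, Fintype.card_perm, Fintype.card_fin]
      norm_num [Nat.factorial]
    have hY'card : Nat.card Y' = 12 := by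
      have h := Subgroup.card_mul_index Y'
      rw [hY'index, hcard24] at h
      omega
    have hsetY' : ((Finset.image (fun w : Equiv.Perm (Fin 4) => w*w) Finset.univ : Finset _) :
        Set (Equiv.Perm (Fin 4))) = (Y' : Set (Equiv.Perm (Fin 4))) := by
      apply Set.eq_of_subset_of_ncard_le
      · intro z hz
        simp only [Finset.coe_image, Set.mem_image] at hz
        obtain ⟨w, _, rfl⟩ := hz
        exact hsq w
      · rw [Set.ncard_coe_finset, D6]
        have h12 : (Y' : Set (Equiv.Perm (Fin 4))).ncard = Nat.card Y' :=
          (Nat.card_coe_set_eq _).symm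
        rw [h12, hY'card]
      · exact Set.toFinite _
    have hY'mem : ∀ z, z ∈ Y' ↔ ∃ w, w*w = z := by
      intro z
      constructor
      · intro hz
        have hz' : z ∈ ((Finset.image (fun w : Equiv.Perm (Fin 4) => w*w) Finset.univ : Finset _) :
            Set (Equiv.Perm (Fin 4))) := by rw [hsetY']; exact hz
        simp only [Finset.coe_image, Set.mem_image] at hz'
        obtain ⟨w, _, hw⟩ := hz'
        exact ⟨w, hw⟩
      · rintro ⟨w, rfl⟩
        exact hsq w
    have haY : a ∈ Y := Subgroup.mem_comap.1 ((hY'mem k1).2 D4)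
    have hbY : b ∈ Y := Subgroup.mem_comap.1 ((hY'mem k2).2 D5)
    have haux : ∀ x, x ∈ X → ∀ h, h ∈ Y → x*h*x⁻¹ ∈ Y := by
      intro x hx h hh
      obtain ⟨σ, rfl⟩ := (hfrange x).1 hx
      obtain ⟨z, rfl⟩ := (hfrange h).1 (hYX hh)
      have hz : z ∈ Y' := Subgroup.mem_comap.2 hh
      obtain ⟨w, hw⟩ := (hY'mem z).1 hz
      have hzc : σ*z*σ⁻¹ ∈ Y' := (hY'mem _).2 ⟨σ*w*σ⁻¹, by rw [← hw]; group⟩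
      have hrw : f σ * f z * (f σ)⁻¹ = f (σ*z*σ⁻¹) := by rw [map_mul, map_mul, map_inv]
      rw [hrw]
      exact Subgroup.mem_comap.1 hzc
    have hXN : X ≤ Subgroup.normalizer (Y : Set (PGL2 F)) := by
      intro x hx
      rw [Subgroup.mem_normalizer_iff]
      intro h
      constructor
      · exact haux x hx h
      · intro hconj
        have hh := haux x⁻¹ (X.inv_mem hx) _ hconj
        have : x⁻¹*(x*h*x⁻¹)*(x⁻¹)⁻¹ = h := by group
        rwa [this] at hh
    refine le_antisymm ?_ hXN
    intro g hg
    have hn := Subgroup.mem_normalizer_iff.1 hg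
    have key : ∀ t : PGL2 F, t ∈ Y → t*t = 1 → t ≠ 1 →
        (g*t*g⁻¹ = a ∨ g*t*g⁻¹ = b ∨ g*t*g⁻¹ = a*b) := by
      intro t ht htt ht1
      have hconj : g*t*g⁻¹ ∈ Y := (hn t).1 ht
      obtain ⟨z, hfz⟩ := (hfrange _).1 (hYX hconj)
      have hz' : z ∈ Y' := Subgroup.mem_comap.2 (by rw [hfz]; exact hconj)
      have hzz : z*z = 1 := hfinj (by
        rw [map_mul, hfz, map_one,
          show (g*t*g⁻¹)*(g*t*g⁻¹) = g*(t*t)*g⁻¹ from by group, htt]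
        group)
      obtain ⟨w, hw⟩ := (hY'mem z).1 hz'
      rcases (D1 z).1 ⟨hzz, w, hw⟩ with h | h | h | h
      · exfalso
        apply ht1
        rw [h, map_one] at hfz
        rw [show t = g⁻¹*(g*t*g⁻¹)*g from by group, ← hfz]
        group
      · left; rw [← hfz, h]
      · right; left; rw [← hfz, h]
      · right; right; rw [← hfz, h, map_mul]
    exact endgame g (key a haY haa ha1) (key b hbY hbb hb1)
end

section
/- Every vertex-primitive finite simple graph of valency 5 is arc-transitive: if Γ is a finite simple graph in which every vertex has exactly 5 neighbours and the full automorphism group Aut(Γ) acts primitively on the vertex set, then Aut(Γ) acts transitively on the arcs of Γ (the ordered pairs of adjacent vertices). -/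
variable {V : Type*} (Γ : SimpleGraph V)

/-- The automorphism group of a graph acts on the vertices. -/
instance : MulAction (Γ ≃g Γ) V where
  smul f v := f v
  one_smul _ := rfl
  mul_smul _ _ _ := rfl

/-- `Γ` is vertex-primitive: its automorphism group acts transitively on the vertices
and every vertex stabilizer is a maximal subgroup. -/
def VertexPrimitive : Prop :=
  MulAction.IsPretransitive (Γ ≃g Γ) V ∧
    ∀ v : V, IsCoatom (MulAction.stabilizer (Γ ≃g Γ) v)

/-- The automorphism group of `Γ` acts transitively on arcs (ordered pairs of
adjacent vertices). -/
def ArcTransitive : Prop :=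
  ∀ u v x y : V, Γ.Adj u v → Γ.Adj x y → ∃ f : Γ ≃g Γ, f u = x ∧ f v = y

section Aux

open MulAction Pointwise

variable {Γ}

lemma AutAux.smul_def (g : Γ ≃g Γ) (v : V) : g • v = g v := rfl

lemma AutAux.eq_one_of_fixes (g : Γ ≃g Γ) (h : ∀ v : V, g • v = v) : g = 1 := by
  ext v; exact h v


/-- smul of neighbors. -/
lemma AutAux.smul_mem_neighborSet {g : Γ ≃g Γ} {v u : V} (hu : u ∈ Γ.neighborSet v) :
    g • u ∈ Γ.neighborSet (g • v) := by
  simpa [SimpleGraph.neighborSet, AutAux.smul_def] using g.map_adj_iff.2 hu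

set_option linter.unusedSectionVars false
variable [Finite V]

instance : Finite (Γ ≃g Γ) :=
  Finite.of_injective (fun f => (f : V → V)) DFunLike.coe_injective

/-- Stabilizers of any two vertices have the same cardinality. -/
lemma AutAux.card_stab_eq (htrans : IsPretransitive (Γ ≃g Γ) V) (u v : V) :
    Nat.card (stabilizer (Γ ≃g Γ) u) = Nat.card (stabilizer (Γ ≃g Γ) v) := by
  obtain ⟨g, hg⟩ := htrans.exists_smul_eq v u
  rw [← hg, stabilizer_smul_eq_stabilizer_map_conj]
  exact (Nat.card_congr (Subgroup.equivMapOfInjective _ _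
    (MulAut.conj g).injective).toEquiv).symm

lemma AutAux.subgroup_eq_of_le {G : Type*} [Group G] [Finite G] {H K : Subgroup G}
    (h : H ≤ K) (hc : Nat.card K ≤ Nat.card H) : H = K := by
  apply SetLike.ext' (Set.eq_of_subset_of_ncard_le h ?_ (Set.toFinite _))
  exact le_trans (le_of_eq (Nat.card_congr (Equiv.setCongr rfl))) (le_trans hc
    (le_of_eq (Nat.card_congr (Equiv.setCongr rfl))))

/-- The block dichotomy from maximality of stabilizers. -/
lemma AutAux.block_lemma (htrans : IsPretransitive (Γ ≃g Γ) V)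
    (hco : ∀ v : V, IsCoatom (stabilizer (Γ ≃g Γ) v)) (v : V) (B : Set V)
    (hvB : v ∈ B) (hB : ∀ g : Γ ≃g Γ, (∃ u ∈ B, g • u ∈ B) → g • B = B) :
    B = Set.univ ∨ B = {v} := by
  have hle : stabilizer (Γ ≃g Γ) v ≤ stabilizer (Γ ≃g Γ) B := by
    intro g hg
    exact hB g ⟨v, hvB, by rw [hg]; exact hvB⟩
  rcases hle.lt_or_eq with hlt | heq
  · left
    have htop := (hco v).2 _ hlt
    ext u
    simp only [Set.mem_univ, iff_true]
    obtain ⟨g, hg⟩ := htrans.exists_smul_eq v u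
    have : g ∈ stabilizer (Γ ≃g Γ) B := htop ▸ Subgroup.mem_top g
    rw [← this, ← hg]
    exact Set.smul_mem_smul_set hvB
  · right
    ext u
    simp only [Set.mem_singleton_iff]
    constructor
    · intro hu
      obtain ⟨g, hg⟩ := htrans.exists_smul_eq v u
      have : g ∈ stabilizer (Γ ≃g Γ) B := hB g ⟨v, hvB, hg ▸ hu⟩
      rw [← heq] at this
      rw [← hg, this]
    · rintro rfl; exact hvB

/-- Handshake: the number of vertices is even. -/
lemma AutAux.card_V_even (hval : ∀ v : V, (Γ.neighborSet v).ncard = 5) :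
    Even (Nat.card V) := by
  classical
  cases nonempty_fintype V
  have hdeg : ∀ v : V, Γ.degree v = 5 := by
    intro v
    rw [← hval v, SimpleGraph.degree, SimpleGraph.neighborFinset_def,
      Set.ncard_eq_toFinset_card']
  have h := Γ.sum_degrees_eq_twice_card_edges
  simp only [hdeg, Finset.sum_const, smul_eq_mul, Finset.card_univ] at h
  have h5 : Even (Fintype.card V * 5) := ⟨Γ.edgeFinset.card, by omega⟩
  rw [Nat.even_mul] at h5
  rw [Nat.card_eq_fintype_card]
  rcases h5 with h5 | h5
  · exact h5
  · exact absurd h5 (by decide)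

lemma AutAux.six_le_card (hval : ∀ v : V, (Γ.neighborSet v).ncard = 5) (v : V) :
    6 ≤ Nat.card V := by
  have h1 : (insert v (Γ.neighborSet v)).ncard = 6 := by
    rw [Set.ncard_insert_of_notMem (Γ.notMem_neighborSet_self) (Set.toFinite _), hval v]
  calc 6 = (insert v (Γ.neighborSet v)).ncard := h1.symm
    _ ≤ (Set.univ : Set V).ncard := Set.ncard_le_ncard (Set.subset_univ _) (Set.toFinite _)
    _ = Nat.card V := Set.ncard_univ V

/-- The action cannot be regular. -/
lemma AutAux.not_regular (hval : ∀ v : V, (Γ.neighborSet v).ncard = 5)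
    (hprim : VertexPrimitive Γ) (v : V)
    (hbot : stabilizer (Γ ≃g Γ) v = ⊥) : False := by
  obtain ⟨htrans, hco⟩ := hprim
  haveI := htrans
  have hcoat : IsCoatom (⊥ : Subgroup (Γ ≃g Γ)) := hbot ▸ hco v
  have hcard : Nat.card (Γ ≃g Γ) = Nat.card V := by
    have h1 := Nat.card_congr (orbitProdStabilizerEquivGroup (Γ ≃g Γ) v)
    rw [Nat.card_prod, orbit_eq_univ, hbot] at h1
    have h2 : Nat.card (⊥ : Subgroup (Γ ≃g Γ)) = 1 := Subgroup.card_bot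
    have h3 : Nat.card (Set.univ : Set V) = Nat.card V :=
      Nat.card_congr (Equiv.Set.univ V)
    rw [h2, h3, mul_one] at h1
    exact h1.symm
  have h6 : 6 ≤ Nat.card (Γ ≃g Γ) := hcard ▸ six_le_card hval v
  obtain ⟨m, hm⟩ : Even (Nat.card (Γ ≃g Γ)) := hcard ▸ card_V_even hval
  have : Nontrivial (Γ ≃g Γ) := by
    rw [← Finite.one_lt_card_iff_nontrivial]; omega
  obtain ⟨g, hg⟩ := exists_ne (1 : Γ ≃g Γ)
  have hzp : Subgroup.zpowers g = ⊤ :=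
    hcoat.2 _ (bot_lt_iff_ne_bot.2 (by simpa using hg))
  have hord : orderOf g = Nat.card (Γ ≃g Γ) := by
    rw [← Nat.card_zpowers, hzp]
    exact Nat.card_congr Subgroup.topEquiv.toEquiv
  by_cases hg2 : g ^ 2 = 1
  · have := orderOf_le_of_pow_eq_one (by norm_num) hg2
    omega
  · have hzp2 : Subgroup.zpowers (g ^ 2) = ⊤ :=
      hcoat.2 _ (bot_lt_iff_ne_bot.2 (by simpa using hg2))
    have hord2 : orderOf (g ^ 2) = Nat.card (Γ ≃g Γ) := by
      rw [← Nat.card_zpowers, hzp2]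
      exact Nat.card_congr Subgroup.topEquiv.toEquiv
    have hpow : orderOf (g ^ 2) = orderOf g / Nat.gcd (orderOf g) 2 := orderOf_pow g
    have hgcd : Nat.gcd (orderOf g) 2 = 2 := by
      rw [Nat.gcd_comm]
      exact Nat.gcd_eq_left ⟨m, by omega⟩
    rw [hgcd, hord, hord2] at hpow
    omega

/-- Two distinct vertices cannot have equal stabilizers. -/
lemma AutAux.stab_eq_false (hval : ∀ v : V, (Γ.neighborSet v).ncard = 5)
    (hprim : VertexPrimitive Γ) {v w : V} (hne : w ≠ v)
    (heq : stabilizer (Γ ≃g Γ) w = stabilizer (Γ ≃g Γ) v) : False := by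
  obtain ⟨htrans, hco⟩ := id hprim
  set B : Set V := {u | stabilizer (Γ ≃g Γ) u = stabilizer (Γ ≃g Γ) v} with hBdef
  have hB : ∀ g : Γ ≃g Γ, (∃ u ∈ B, g • u ∈ B) → g • B = B := by
    rintro g ⟨u, hu, hgu⟩
    have hu' : stabilizer (Γ ≃g Γ) u = stabilizer (Γ ≃g Γ) v := hu
    have hgu' : stabilizer (Γ ≃g Γ) (g • u) = stabilizer (Γ ≃g Γ) v := hgu
    have hconj : (stabilizer (Γ ≃g Γ) v).map (MulAut.conj g).toMonoidHom
        = stabilizer (Γ ≃g Γ) v := by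
      have h1 := stabilizer_smul_eq_stabilizer_map_conj g u
      rw [hu'] at h1
      rw [← h1]; exact hgu'
    ext x
    rw [Set.mem_smul_set_iff_inv_smul_mem]
    show stabilizer _ (g⁻¹ • x) = stabilizer _ v ↔ stabilizer _ x = stabilizer _ v
    have h2 := stabilizer_smul_eq_stabilizer_map_conj g (g⁻¹ • x)
    rw [smul_inv_smul] at h2
    constructor
    · intro h; rw [h2, h, hconj]
    · intro h
      apply Subgroup.map_injective (G := Γ ≃g Γ) (f := (MulAut.conj g).toMonoidHom)
        (MulAut.conj g).injective
      rw [← h2, h, hconj]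
  have hdi := block_lemma htrans hco v B rfl hB
  have hBuniv : B = Set.univ := by
    rcases hdi with h | h
    · exact h
    · exfalso
      have hwB : w ∈ B := heq
      rw [h] at hwB
      exact hne hwB
  have hbot : stabilizer (Γ ≃g Γ) v = ⊥ := by
    rw [eq_bot_iff]
    intro x hx
    rw [Subgroup.mem_bot]
    apply eq_one_of_fixes
    intro u
    have hu : stabilizer (Γ ≃g Γ) u = stabilizer (Γ ≃g Γ) v := by
      have : u ∈ B := hBuniv ▸ Set.mem_univ u
      exact this
    have : x ∈ stabilizer (Γ ≃g Γ) u := hu ▸ hx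
    exact this
  exact not_regular hval hprim v hbot

/-- Orbit-stabilizer for a subgroup. -/
lemma AutAux.orbit_card (H : Subgroup (Γ ≃g Γ)) (w : V) :
    Nat.card (orbit H w) * Nat.card (stabilizer H w) = Nat.card H := by
  have := Nat.card_congr (orbitProdStabilizerEquivGroup H w)
  rwa [Nat.card_prod] at this

lemma AutAux.card_stab_inf (H : Subgroup (Γ ≃g Γ)) (w : V) :
    Nat.card (stabilizer H w) = Nat.card ((H ⊓ stabilizer (Γ ≃g Γ) w : Subgroup (Γ ≃g Γ))) := by
  apply Nat.card_congr
  exact { toFun := fun x => ⟨x.1.1, x.1.2, x.2⟩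
          invFun := fun x => ⟨⟨x.1, x.2.1⟩, x.2.2⟩
          left_inv := fun _ => rfl
          right_inv := fun _ => rfl }

/-- Conjugation stability for an index-two situation. -/
lemma AutAux.conj_mem {G : Type*} [Group G] [Finite G] {H K : Subgroup G} (hle : H ≤ K)
    (hcard : Nat.card K = 2 * Nat.card H) {k h : G} (hk : k ∈ K) (hh : h ∈ H) :
    k * h * k⁻¹ ∈ H := by
  set L := H.subgroupOf K with hL
  have hcardL : Nat.card L = Nat.card H :=
    Nat.card_congr (Subgroup.subgroupOfEquivOfLe hle).toEquiv
  have hidx : L.index = 2 := by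
    have h1 := Subgroup.card_mul_index L
    have hpos : 0 < Nat.card H := Nat.card_pos
    rw [hcardL, hcard] at h1
    have : Nat.card H * L.index = Nat.card H * 2 := by omega
    exact Nat.eq_of_mul_eq_mul_left hpos this
  have hhL : (⟨h, hle hh⟩ : K) ∈ L := by rwa [Subgroup.mem_subgroupOf]
  have hmem : (⟨k, hk⟩ : K) * ⟨h, hle hh⟩ * (⟨k, hk⟩ : K)⁻¹ ∈ L := by
    rw [mul_assoc, Subgroup.mul_mem_iff_of_index_two hidx,
      Subgroup.mul_mem_iff_of_index_two hidx, inv_mem_iff (x := (⟨k, hk⟩ : K))]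
    tauto
  rwa [Subgroup.mem_subgroupOf] at hmem

/-- The stabilizer of `v` acts transitively on the neighbours of `v`. -/
lemma AutAux.neighbor_transitive (hval : ∀ v : V, (Γ.neighborSet v).ncard = 5)
    (hprim : VertexPrimitive Γ) (v w w' : V)
    (hw : w ∈ Γ.neighborSet v) (hw' : w' ∈ Γ.neighborSet v) :
    w' ∈ orbit (stabilizer (Γ ≃g Γ) v) w := by
  obtain ⟨htrans, hco⟩ := id hprim
  by_contra hcon
  set H := stabilizer (Γ ≃g Γ) v with hH
  have hsmul : ∀ (x : H) (u : V), x • u = (x : Γ ≃g Γ) • u := fun _ _ => rfl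
  -- orbits of neighbours stay in the neighbourhood
  have horb : ∀ u ∈ Γ.neighborSet v, orbit H u ⊆ Γ.neighborSet v := by
    rintro u hu x ⟨⟨g, hg⟩, rfl⟩
    have h1 : g • u ∈ Γ.neighborSet (g • v) := smul_mem_neighborSet hu
    have hgv : g • v = v := hg
    rw [hgv] at h1
    exact h1
  -- no neighbour is fixed by all of H
  have hge2 : ∀ u ∈ Γ.neighborSet v, ∃ x ∈ orbit H u, x ≠ u := by
    intro u hu
    by_contra hfix
    push_neg at hfix
    have hle : H ≤ stabilizer (Γ ≃g Γ) u := by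
      intro g hg
      have : (⟨g, hg⟩ : H) • u ∈ orbit H u := mem_orbit _ _
      exact hfix _ this
    have heq : H = stabilizer (Γ ≃g Γ) u :=
      subgroup_eq_of_le hle (le_of_eq (card_stab_eq htrans u v))
    exact stab_eq_false hval hprim (Γ.ne_of_adj hu).symm heq.symm
  have hge2' : ∀ u ∈ Γ.neighborSet v, 2 ≤ (orbit H u).ncard := by
    intro u hu
    obtain ⟨x, hx, hxu⟩ := hge2 u hu
    calc 2 = ({x, u} : Set V).ncard := (Set.ncard_pair hxu).symm
      _ ≤ (orbit H u).ncard := Set.ncard_le_ncard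
          (by
            rintro y (rfl | rfl)
            · exact hx
            · exact mem_orbit_self _) (Set.toFinite _)
  -- disjointness of distinct orbits
  have hdisj : ∀ a b : V, b ∉ orbit H a → Disjoint (orbit H a) (orbit H b) := by
    intro a b hab
    rw [Set.disjoint_left]
    intro x hxa hxb
    have h1 : orbit H x = orbit H a := orbit_eq_iff.2 hxa
    have h2 : orbit H x = orbit H b := orbit_eq_iff.2 hxb
    apply hab
    rw [← h1, h2]
    exact mem_orbit_self b
  have hwo : w' ∉ orbit H w → w ∉ orbit H w' := by
    intro h1 h2
    exact h1 (orbit_eq_iff.2 h2 ▸ mem_orbit_self w')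
  -- find a neighbour whose orbit has exactly two elements
  obtain ⟨w₀, w₁, hw₀, hw₁, horb2, hnot⟩ :
      ∃ w₀ w₁, w₀ ∈ Γ.neighborSet v ∧ w₁ ∈ Γ.neighborSet v ∧
        (orbit H w₀).ncard = 2 ∧ w₁ ∉ orbit H w₀ := by
    have hd := hdisj w w' hcon
    have hsum : (orbit H w).ncard + (orbit H w').ncard ≤ 5 := by
      have h1 : (orbit H w ∪ orbit H w').ncard ≤ 5 := by
        rw [← hval v]
        exact Set.ncard_le_ncard (Set.union_subset (horb w hw) (horb w' hw'))
          (Set.toFinite _)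
      rwa [Set.ncard_union_eq hd (Set.toFinite _) (Set.toFinite _)] at h1
    have h2w := hge2' w hw
    have h2w' := hge2' w' hw'
    rcases (by omega : (orbit H w).ncard = 2 ∨ (orbit H w').ncard = 2) with h | h
    · exact ⟨w, w', hw, hw', h, hcon⟩
    · exact ⟨w', w, hw', hw, h, hwo hcon⟩
  set N0 : Subgroup (Γ ≃g Γ) := H ⊓ stabilizer (Γ ≃g Γ) w₀ with hN0
  have hNle : N0 ≤ H := inf_le_left
  -- |H| = 2 |N0|
  have hcard2 : Nat.card H = 2 * Nat.card N0 := by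
    have h1 := orbit_card H w₀
    have h2 : Nat.card (orbit H w₀) = 2 := by
      rw [Nat.card_coe_set_eq]; exact horb2
    rw [h2, card_stab_inf, ← hN0] at h1
    exact h1.symm
  have hcardw0 : Nat.card (stabilizer (Γ ≃g Γ) w₀) = 2 * Nat.card N0 := by
    rw [card_stab_eq htrans w₀ v, ← hH]; exact hcard2
  have hNle' : N0 ≤ stabilizer (Γ ≃g Γ) w₀ := inf_le_right
  -- both stabilizers normalize N0
  have hnorm : H ⊔ stabilizer (Γ ≃g Γ) w₀ ≤ Subgroup.normalizer (N0 : Set (Γ ≃g Γ)) := by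
    apply sup_le
    · intro g hg
      rw [Subgroup.mem_normalizer_iff]
      intro x
      constructor
      · intro hx; exact conj_mem hNle hcard2 hg hx
      · intro hx
        have := conj_mem hNle hcard2 (inv_mem hg) hx
        simpa [mul_assoc] using this
    · intro g hg
      rw [Subgroup.mem_normalizer_iff]
      intro x
      constructor
      · intro hx; exact conj_mem hNle' hcardw0 hg hx
      · intro hx
        have := conj_mem hNle' hcardw0 (inv_mem hg) hx
        simpa [mul_assoc] using this
  rcases (le_sup_left : H ≤ H ⊔ stabilizer (Γ ≃g Γ) w₀).lt_or_eq with hlt | heqs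
  · -- the join is everything, so N0 is normal, hence trivial, so |H| = 2
    have htop : H ⊔ stabilizer (Γ ≃g Γ) w₀ = ⊤ := (hco v).2 _ hlt
    have hnormal : ∀ g : Γ ≃g Γ, ∀ x ∈ N0, g * x * g⁻¹ ∈ N0 := by
      intro g x hx
      have hg : g ∈ Subgroup.normalizer (N0 : Set (Γ ≃g Γ)) := hnorm (htop ▸ Subgroup.mem_top g)
      exact (Subgroup.mem_normalizer_iff.1 hg x).1 hx
    have hNbot : Nat.card N0 = 1 := by
      have : N0 = ⊥ := by
        rw [eq_bot_iff]
        intro x hx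
        rw [Subgroup.mem_bot]
        apply eq_one_of_fixes
        intro u
        obtain ⟨g, hg⟩ := htrans.exists_smul_eq v u
        have hx' : g⁻¹ * x * g ∈ N0 := by
          have := hnormal g⁻¹ x hx
          simpa using this
        have hfix : (g⁻¹ * x * g) • v = v := (hNle hx' : _ ∈ H)
        calc x • u = x • g • v := by rw [hg]
          _ = (x * g) • v := (mul_smul x g v).symm
          _ = (g * (g⁻¹ * x * g)) • v := by group
          _ = g • ((g⁻¹ * x * g) • v) := mul_smul _ _ _
          _ = g • v := by rw [hfix]
          _ = u := hg
      rw [this]; exact Subgroup.card_bot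
    have hH2 : Nat.card H = 2 := by omega
    -- every neighbour orbit now has exactly 2 elements; 5 is odd, contradiction
    have horbcard : ∀ u ∈ Γ.neighborSet v, (orbit H u).ncard = 2 := by
      intro u hu
      have h1 := orbit_card H u
      have hpos : 0 < Nat.card (stabilizer H u) := Nat.card_pos
      have h2 := hge2' u hu
      rw [hH2] at h1
      have hdvd : Nat.card (orbit H u) ∣ 2 := ⟨Nat.card (stabilizer H u), h1.symm⟩
      have hle2 := Nat.le_of_dvd (by norm_num) hdvd
      rw [← Nat.card_coe_set_eq] at h2 ⊢
      omega
    -- pick three pairwise disjoint orbits inside a 5-element set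
    have h1 : (orbit H w₀ ∪ orbit H w₁).ncard = 4 := by
      rw [Set.ncard_union_eq (hdisj w₀ w₁ hnot) (Set.toFinite _) (Set.toFinite _),
        horb2, horbcard w₁ hw₁]
    obtain ⟨w₂, hw₂, hw₂n⟩ : ∃ w₂ ∈ Γ.neighborSet v, w₂ ∉ orbit H w₀ ∪ orbit H w₁ := by
      by_contra hsub
      push_neg at hsub
      have : (Γ.neighborSet v).ncard ≤ 4 := by
        rw [← h1]
        exact Set.ncard_le_ncard hsub (Set.toFinite _)
      rw [hval v] at this
      omega
    have hsub2 : orbit H w₂ ⊆ Γ.neighborSet v \ (orbit H w₀ ∪ orbit H w₁) := by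
      intro x hx
      refine ⟨horb w₂ hw₂ hx, ?_⟩
      rintro (hx0 | hx1)
      · exact (Set.disjoint_left.1 (hdisj w₀ w₂ (fun h => hw₂n (Or.inl h)))) hx0 hx
      · exact (Set.disjoint_left.1 (hdisj w₁ w₂ (fun h => hw₂n (Or.inr h)))) hx1 hx
    have hd1 : (Γ.neighborSet v \ (orbit H w₀ ∪ orbit H w₁)).ncard = 1 := by
      rw [Set.ncard_diff (Set.union_subset (horb w₀ hw₀) (horb w₁ hw₁)) (Set.toFinite _),
        h1, hval v]
    have := Set.ncard_le_ncard hsub2 (Set.toFinite _)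
    rw [hd1, horbcard w₂ hw₂] at this
    omega
  · -- the join is H itself: the two stabilizers are equal, contradiction
    have hle : stabilizer (Γ ≃g Γ) w₀ ≤ H := heqs ▸ le_sup_right
    have heqst : stabilizer (Γ ≃g Γ) w₀ = H :=
      subgroup_eq_of_le hle (le_of_eq (card_stab_eq htrans v w₀))
    exact stab_eq_false hval hprim (Γ.ne_of_adj hw₀).symm heqst

end Aux

theorem stmt_17 {V : Type*} [Finite V] (Γ : SimpleGraph V)
    (hval : ∀ v : V, (Γ.neighborSet v).ncard = 5)
    (hprim : VertexPrimitive Γ) :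
    ArcTransitive Γ := by
  intro u v x y huv hxy
  obtain ⟨htrans, hco⟩ := id hprim
  obtain ⟨g, hg⟩ := htrans.exists_smul_eq u x
  have huv' : v ∈ Γ.neighborSet u := huv
  have hgv : g • v ∈ Γ.neighborSet x := by
    have := AutAux.smul_mem_neighborSet (g := g) huv'
    rwa [hg] at this
  have hy : y ∈ Γ.neighborSet x := hxy
  obtain ⟨⟨h, hh⟩, hhy⟩ :=
    AutAux.neighbor_transitive hval hprim x (g • v) y hgv hy
  refine ⟨h * g, ?_, ?_⟩
  · show (h * g) • u = x
    rw [mul_smul, hg]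
    exact hh
  · show (h * g) • v = y
    rw [mul_smul]
    exact hhy
end
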